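/- arXiv:1009.3173 — 7 statements merged into one kernel-verified Lean document; each statement's English description precedes it below -/
import Mathlib

section
/- Let b > 1, T > 0, Ω = (1,b)×(1,b) ⊂ ℝ², and let G : ℝ × ℝ² → ℝ² be a C¹ vector field such that for some δ > 0 and for all t ∈ [0,T]: G₁(t,(1,θ)) ≥ δ, G₁(t,(b,θ)) ≤ −δ for θ ∈ [1,b], and G₂(t,(x,1)) ≥ δ, G₂(t,(x,b)) ≤ −δ for x ∈ [1,b]. Let X(t;τ,y) denote the unique solution of dX/dt = G(t,X) with X(τ;τ,y) = y. Then for each t ∈ [0,T] the map (τ,σ) ↦ X(t;τ,σ) is injective on the set {(τ,σ) : 0 ≤ τ ≤ t, σ ∈ ∂Ω}: if σ, σ' ∈ ∂Ω, 0 ≤ τ, τ' ≤ t and X(t;τ,σ) = X(t;τ',σ'), then τ = τ' and σ = σ'. -/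
open Set Filter Topology

lemma ev_slope {f : ℝ → ℝ} {x c : ℝ} (hf : HasDerivAt f c x) (hc : 0 < c) :
    ∀ᶠ u in 𝓝[≠] x, 0 < slope f x u := by
  rw [hasDerivAt_iff_tendsto_slope] at hf
  exact hf (Ioi_mem_nhds hc)

lemma ev_right_pos {f : ℝ → ℝ} {x c : ℝ} (hf : HasDerivAt f c x) (hc : 0 < c) :
    ∀ᶠ u in 𝓝[>] x, f x < f u := by
  have h := (ev_slope hf hc).filter_mono
    (nhdsWithin_mono x (fun u (hu : u ∈ Ioi x) => hu.ne'))
  filter_upwards [h, self_mem_nhdsWithin] with u hu hu'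
  have hx : (0:ℝ) < u - x := sub_pos.mpr hu'
  rw [slope_def_field, div_pos_iff] at hu
  rcases hu with ⟨h1, _⟩ | ⟨_, h2⟩
  · linarith
  · linarith

lemma ev_left_pos {f : ℝ → ℝ} {x c : ℝ} (hf : HasDerivAt f c x) (hc : 0 < c) :
    ∀ᶠ u in 𝓝[<] x, f u < f x := by
  have h := (ev_slope hf hc).filter_mono
    (nhdsWithin_mono x (fun u (hu : u ∈ Iio x) => hu.ne))
  filter_upwards [h, self_mem_nhdsWithin] with u hu hu'
  have hx : u - x < 0 := sub_neg.mpr hu'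
  rw [slope_def_field, div_pos_iff] at hu
  rcases hu with ⟨_, h2⟩ | ⟨h1, _⟩
  · linarith
  · linarith

lemma ev_right_neg {f : ℝ → ℝ} {x c : ℝ} (hf : HasDerivAt f c x) (hc : c < 0) :
    ∀ᶠ u in 𝓝[>] x, f u < f x := by
  have := ev_right_pos hf.neg (by linarith : (0:ℝ) < -c)
  filter_upwards [this] with u hu; simpa using hu

lemma ev_left_neg {f : ℝ → ℝ} {x c : ℝ} (hf : HasDerivAt f c x) (hc : c < 0) :
    ∀ᶠ u in 𝓝[<] x, f x < f u := by
  have := ev_left_pos hf.neg (by linarith : (0:ℝ) < -c)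
  filter_upwards [this] with u hu; simpa using hu

lemma fst_deriv {f : ℝ → ℝ × ℝ} {p : ℝ × ℝ} {x : ℝ} (hf : HasDerivAt f p x) :
    HasDerivAt (fun u => (f u).1) p.1 x :=
  (ContinuousLinearMap.fst ℝ ℝ ℝ).hasFDerivAt.comp_hasDerivAt x hf

lemma snd_deriv {f : ℝ → ℝ × ℝ} {p : ℝ × ℝ} {x : ℝ} (hf : HasDerivAt f p x) :
    HasDerivAt (fun u => (f u).2) p.2 x :=
  (ContinuousLinearMap.snd ℝ ℝ ℝ).hasFDerivAt.comp_hasDerivAt x hf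

lemma invariant (b T δ : ℝ) (hb : 1 < b) (hδ : 0 < δ)
    (G : ℝ → ℝ × ℝ → ℝ × ℝ)
    (hleft : ∀ t ∈ Set.Icc (0:ℝ) T, ∀ θ ∈ Set.Icc (1:ℝ) b, δ ≤ (G t (1, θ)).1)
    (hright : ∀ t ∈ Set.Icc (0:ℝ) T, ∀ θ ∈ Set.Icc (1:ℝ) b, (G t (b, θ)).1 ≤ -δ)
    (hbot : ∀ t ∈ Set.Icc (0:ℝ) T, ∀ x ∈ Set.Icc (1:ℝ) b, δ ≤ (G t (x, 1)).2)
    (htop : ∀ t ∈ Set.Icc (0:ℝ) T, ∀ x ∈ Set.Icc (1:ℝ) b, (G t (x, b)).2 ≤ -δ)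
    (f : ℝ → ℝ × ℝ) (hf : ∀ u, HasDerivAt f (G u (f u)) u)
    (τ : ℝ) (hτ : τ ∈ Set.Icc (0:ℝ) T)
    (h0 : f τ ∈ Set.Icc (1:ℝ) b ×ˢ Set.Icc (1:ℝ) b) :
    ∀ u ∈ Set.Icc τ T, f u ∈ Set.Icc (1:ℝ) b ×ˢ Set.Icc (1:ℝ) b := by
  set K : Set (ℝ × ℝ) := Set.Icc (1:ℝ) b ×ˢ Set.Icc (1:ℝ) b with hKdef
  have hfc : Continuous f := by
    rw [continuous_iff_continuousAt]; exact fun u => (hf u).continuousAt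
  have hclosed : IsClosed {u : ℝ | f u ∈ K} :=
    (isClosed_Icc.prod isClosed_Icc).preimage hfc
  intro u hu
  refine IsClosed.Icc_subset_of_forall_mem_nhdsWithin
    (hclosed.inter isClosed_Icc) h0 ?_ hu
  rintro x ⟨hxK, hx1, hx2⟩
  have hxT : x ∈ Set.Icc (0:ℝ) T := ⟨le_trans hτ.1 hx1, le_of_lt hx2⟩
  obtain ⟨⟨ha1, ha2⟩, hb1, hb2⟩ := hxK
  -- constraint 1 : 1 ≤ (f u).1
  have e1 : ∀ᶠ u in 𝓝[>] x, 1 < (f u).1 := by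
    rcases eq_or_lt_of_le ha1 with h | h
    · have hfx : f x = (1, (f x).2) := by
        ext <;> simp [h.symm]
      have hd : δ ≤ (G x (f x)).1 := by
        rw [hfx]; exact hleft x hxT _ ⟨hb1, hb2⟩
      have := ev_right_pos (fst_deriv (hf x)) (lt_of_lt_of_le hδ hd)
      rw [← h] at this; exact this
    · exact eventually_nhdsWithin_of_eventually_nhds <|
        (continuous_fst.comp hfc).continuousAt (Ioi_mem_nhds h)
  have e2 : ∀ᶠ u in 𝓝[>] x, (f u).1 < b := by
    rcases eq_or_lt_of_le ha2 with h | h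
    · have hfx : f x = (b, (f x).2) := by
        ext <;> simp [h]
      have hd : (G x (f x)).1 ≤ -δ := by
        rw [hfx]; exact hright x hxT _ ⟨hb1, hb2⟩
      have := ev_right_neg (fst_deriv (hf x)) (lt_of_le_of_lt hd (by linarith))
      rw [h] at this; exact this
    · exact eventually_nhdsWithin_of_eventually_nhds <|
        (continuous_fst.comp hfc).continuousAt (Iio_mem_nhds h)
  have e3 : ∀ᶠ u in 𝓝[>] x, 1 < (f u).2 := by
    rcases eq_or_lt_of_le hb1 with h | h
    · have hfx : f x = ((f x).1, 1) := by
        ext <;> simp [h.symm]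
      have hd : δ ≤ (G x (f x)).2 := by
        rw [hfx]; exact hbot x hxT _ ⟨ha1, ha2⟩
      have := ev_right_pos (snd_deriv (hf x)) (lt_of_lt_of_le hδ hd)
      rw [← h] at this; exact this
    · exact eventually_nhdsWithin_of_eventually_nhds <|
        (continuous_snd.comp hfc).continuousAt (Ioi_mem_nhds h)
  have e4 : ∀ᶠ u in 𝓝[>] x, (f u).2 < b := by
    rcases eq_or_lt_of_le hb2 with h | h
    · have hfx : f x = ((f x).1, b) := by
        ext <;> simp [h]
      have hd : (G x (f x)).2 ≤ -δ := by
        rw [hfx]; exact htop x hxT _ ⟨ha1, ha2⟩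
      have := ev_right_neg (snd_deriv (hf x)) (lt_of_le_of_lt hd (by linarith))
      rw [h] at this; exact this
    · exact eventually_nhdsWithin_of_eventually_nhds <|
        (continuous_snd.comp hfc).continuousAt (Iio_mem_nhds h)
  filter_upwards [e1, e2, e3, e4] with u h1 h2 h3 h4
  exact ⟨⟨le_of_lt h1, le_of_lt h2⟩, le_of_lt h3, le_of_lt h4⟩

lemma no_return (b T δ : ℝ) (hb : 1 < b) (hδ : 0 < δ)
    (G : ℝ → ℝ × ℝ → ℝ × ℝ)
    (hleft : ∀ t ∈ Set.Icc (0:ℝ) T, ∀ θ ∈ Set.Icc (1:ℝ) b, δ ≤ (G t (1, θ)).1)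
    (hright : ∀ t ∈ Set.Icc (0:ℝ) T, ∀ θ ∈ Set.Icc (1:ℝ) b, (G t (b, θ)).1 ≤ -δ)
    (hbot : ∀ t ∈ Set.Icc (0:ℝ) T, ∀ x ∈ Set.Icc (1:ℝ) b, δ ≤ (G t (x, 1)).2)
    (htop : ∀ t ∈ Set.Icc (0:ℝ) T, ∀ x ∈ Set.Icc (1:ℝ) b, (G t (x, b)).2 ≤ -δ)
    (f : ℝ → ℝ × ℝ) (hf : ∀ u, HasDerivAt f (G u (f u)) u)
    (τ τ' : ℝ) (hτ0 : 0 ≤ τ) (hτ'T : τ' ≤ T) (hlt : τ < τ')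
    (hK : f τ ∈ Set.Icc (1:ℝ) b ×ˢ Set.Icc (1:ℝ) b)
    (hfr : f τ' ∈ frontier (Set.Ioo (1:ℝ) b ×ˢ Set.Ioo (1:ℝ) b)) : False := by
  have hinv := invariant b T δ hb hδ G hleft hright hbot htop f hf τ
    ⟨hτ0, le_trans hlt.le hτ'T⟩ hK
  have hKτ' := hinv τ' ⟨hlt.le, hτ'T⟩
  have hτ'I : τ' ∈ Set.Icc (0:ℝ) T := ⟨le_trans hτ0 hlt.le, hτ'T⟩
  rw [frontier_prod_eq, closure_Ioo (ne_of_lt hb), frontier_Ioo hb] at hfr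
  have main : ∀ P : ℝ × ℝ → Prop, (∀ᶠ u in 𝓝[<] τ', P (f u)) →
      (∀ y ∈ Set.Icc (1:ℝ) b ×ˢ Set.Icc (1:ℝ) b, ¬ P y) → False := by
    intro P hev hnot
    have h1 : ∀ᶠ u in 𝓝[<] τ', τ < u :=
      mem_nhdsWithin_of_mem_nhds (Ioi_mem_nhds hlt)
    have h2 : ∀ᶠ u in 𝓝[<] τ', u < τ' := self_mem_nhdsWithin
    obtain ⟨u, hP, hgt, hltu⟩ := (hev.and (h1.and h2)).exists
    exact hnot (f u) (hinv u ⟨hgt.le, hltu.le.trans hτ'T⟩) hP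
  rcases hfr with ⟨⟨hfx1, hfx2⟩, hfy⟩ | ⟨hfx, ⟨hfy1, hfy2⟩⟩
  · rcases hfy with h | h
    · have hfxeq : f τ' = ((f τ').1, 1) := by ext <;> simp [h]
      have hd : δ ≤ (G τ' (f τ')).2 := by
        rw [hfxeq]; exact hbot τ' hτ'I _ ⟨hfx1, hfx2⟩
      have hev := ev_left_pos (snd_deriv (hf τ')) (lt_of_lt_of_le hδ hd)
      rw [h] at hev
      exact main (fun y => y.2 < 1) hev fun y hy hy' => absurd hy'
        (not_lt.mpr hy.2.1)
    · rw [mem_singleton_iff] at h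
      have hfxeq : f τ' = ((f τ').1, b) := by ext <;> simp [h]
      have hd : (G τ' (f τ')).2 ≤ -δ := by
        rw [hfxeq]; exact htop τ' hτ'I _ ⟨hfx1, hfx2⟩
      have hev := ev_left_neg (snd_deriv (hf τ')) (lt_of_le_of_lt hd (by linarith))
      rw [h] at hev
      exact main (fun y => b < y.2) hev fun y hy hy' => absurd hy'
        (not_lt.mpr hy.2.2)
  · rcases hfx with h | h
    · have hfxeq : f τ' = (1, (f τ').2) := by ext <;> simp [h]
      have hd : δ ≤ (G τ' (f τ')).1 := by
        rw [hfxeq]; exact hleft τ' hτ'I _ ⟨hfy1, hfy2⟩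
      have hev := ev_left_pos (fst_deriv (hf τ')) (lt_of_lt_of_le hδ hd)
      rw [h] at hev
      exact main (fun y => y.1 < 1) hev fun y hy hy' => absurd hy'
        (not_lt.mpr hy.1.1)
    · rw [mem_singleton_iff] at h
      have hfxeq : f τ' = (b, (f τ').2) := by ext <;> simp [h]
      have hd : (G τ' (f τ')).1 ≤ -δ := by
        rw [hfxeq]; exact hright τ' hτ'I _ ⟨hfy1, hfy2⟩
      have hev := ev_left_neg (fst_deriv (hf τ')) (lt_of_le_of_lt hd (by linarith))
      rw [h] at hev
      exact main (fun y => b < y.1) hev fun y hy hy' => absurd hy'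
        (not_lt.mpr hy.1.2)





/-- **Injectivity of the characteristic map on `[0,t] × ∂Ω`.** Let `G` be a `C¹` vector field
pointing strictly inward along the boundary of the square `Ω = (1,b)²` on the time interval
`[0,T]`, and let `X t τ y` be the solution of `dX/dt = G(t,X)` with `X(τ;τ,y) = y`. Then for
every `t ∈ [0,T]`, the map `(τ,σ) ↦ X(t;τ,σ)` is injective on `{(τ,σ) : 0 ≤ τ ≤ t, σ ∈ ∂Ω}`. -/
theorem stmt3 (b T δ : ℝ) (hb : 1 < b) (hT : 0 < T) (hδ : 0 < δ)
    (G : ℝ → ℝ × ℝ → ℝ × ℝ)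
    (hG : ContDiff ℝ 1 fun p : ℝ × (ℝ × ℝ) => G p.1 p.2)
    (hleft : ∀ t ∈ Set.Icc (0:ℝ) T, ∀ θ ∈ Set.Icc (1:ℝ) b, δ ≤ (G t (1, θ)).1)
    (hright : ∀ t ∈ Set.Icc (0:ℝ) T, ∀ θ ∈ Set.Icc (1:ℝ) b, (G t (b, θ)).1 ≤ -δ)
    (hbot : ∀ t ∈ Set.Icc (0:ℝ) T, ∀ x ∈ Set.Icc (1:ℝ) b, δ ≤ (G t (x, 1)).2)
    (htop : ∀ t ∈ Set.Icc (0:ℝ) T, ∀ x ∈ Set.Icc (1:ℝ) b, (G t (x, b)).2 ≤ -δ)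
    (X : ℝ → ℝ → ℝ × ℝ → ℝ × ℝ)
    (hXinit : ∀ τ y, X τ τ y = y)
    (hXode : ∀ τ y t, HasDerivAt (fun u => X u τ y) (G t (X t τ y)) t) :
    ∀ t ∈ Set.Icc (0:ℝ) T, ∀ τ ∈ Set.Icc (0:ℝ) t, ∀ τ' ∈ Set.Icc (0:ℝ) t,
      ∀ σ ∈ frontier (Set.Ioo (1:ℝ) b ×ˢ Set.Ioo (1:ℝ) b),
      ∀ σ' ∈ frontier (Set.Ioo (1:ℝ) b ×ˢ Set.Ioo (1:ℝ) b),
      X t τ σ = X t τ' σ' → τ = τ' ∧ σ = σ' := by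
  intro t ht τ hτ τ' hτ' σ hσ σ' hσ' hXeq
  set f : ℝ → ℝ × ℝ := fun u => X u τ σ with hfdef
  set g : ℝ → ℝ × ℝ := fun u => X u τ' σ' with hgdef
  have hfc : Continuous f := by
    rw [continuous_iff_continuousAt]; exact fun u => (hXode τ σ u).continuousAt
  have hgc : Continuous g := by
    rw [continuous_iff_continuousAt]; exact fun u => (hXode τ' σ' u).continuousAt
  -- bounds on trajectories
  obtain ⟨C1, hC1⟩ := isCompact_Icc.exists_bound_of_continuousOn
    (hfc.continuousOn : ContinuousOn f (Set.Icc 0 t))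
  obtain ⟨C2, hC2⟩ := isCompact_Icc.exists_bound_of_continuousOn
    (hgc.continuousOn : ContinuousOn g (Set.Icc 0 t))
  set R : ℝ := max C1 C2 with hRdef
  set F : ℝ × (ℝ × ℝ) → ℝ × ℝ := fun p => G p.1 p.2 with hFdef
  set S : Set (ℝ × (ℝ × ℝ)) := Set.Icc (0:ℝ) t ×ˢ Metric.closedBall 0 R with hSdef
  obtain ⟨C, hC⟩ := (isCompact_Icc.prod (isCompact_closedBall _ _)).exists_bound_of_continuousOn
    ((hG.continuous_fderiv one_ne_zero).continuousOn : ContinuousOn (fderiv ℝ F) S)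
  set K : NNReal := ⟨max C 0, le_max_right _ _⟩ with hKdef
  have hLip : LipschitzOnWith K F S := by
    refine ((convex_Icc _ _).prod (convex_closedBall _ _)).lipschitzOnWith_of_nnnorm_hasFDerivWithin_le
      (f' := fderiv ℝ F) (fun p hp => ((hG.differentiable one_ne_zero) p).hasFDerivAt.hasFDerivWithinAt)
      (fun p hp => ?_)
    rw [← NNReal.coe_le_coe, coe_nnnorm]
    exact le_max_of_le_left (hC p hp)
  set s : ℝ → Set (ℝ × ℝ) := fun u =>
    if u ∈ Set.Icc (0:ℝ) t then Metric.closedBall 0 R else ∅ with hsdef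
  have hv : ∀ u, LipschitzOnWith K (G u) (s u) := by
    intro u
    by_cases h : u ∈ Set.Icc (0:ℝ) t
    · simp only [s, if_pos h]
      intro y hy y' hy'
      have := hLip (show (u, y) ∈ S from ⟨h, hy⟩) (show (u, y') ∈ S from ⟨h, hy'⟩)
      simpa [F, Prod.edist_eq, edist_self] using this
    · simp only [s, if_neg h]
      exact lipschitzOnWith_empty _ _
  have heqOn : Set.EqOn f g (Set.Icc 0 t) := by
    refine ODE_solution_unique_of_mem_Icc_left (fun u _ => hv u) hfc.continuousOn
      (fun u hu => (hXode τ σ u).hasDerivWithinAt)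
      (fun u hu => ?_) hgc.continuousOn
      (fun u hu => (hXode τ' σ' u).hasDerivWithinAt)
      (fun u hu => ?_) hXeq
    · simp only [s, if_pos (Set.Ioc_subset_Icc_self hu), Metric.mem_closedBall,
        dist_zero_right]
      exact le_trans (hC1 u (Set.Ioc_subset_Icc_self hu)) (le_max_left _ _)
    · simp only [s, if_pos (Set.Ioc_subset_Icc_self hu), Metric.mem_closedBall,
        dist_zero_right]
      exact le_trans (hC2 u (Set.Ioc_subset_Icc_self hu)) (le_max_right _ _)
  have hfτ : f τ = σ := hXinit τ σ
  have hgτ' : g τ' = σ' := hXinit τ' σ'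
  have hσK : σ ∈ Set.Icc (1:ℝ) b ×ˢ Set.Icc (1:ℝ) b := by
    have := frontier_subset_closure hσ
    rwa [closure_prod_eq, closure_Ioo (ne_of_lt hb)] at this
  have hσ'K : σ' ∈ Set.Icc (1:ℝ) b ×ˢ Set.Icc (1:ℝ) b := by
    have := frontier_subset_closure hσ'
    rwa [closure_prod_eq, closure_Ioo (ne_of_lt hb)] at this
  rcases lt_trichotomy τ τ' with hlt | heq | hgt
  · exfalso
    refine no_return b T δ hb hδ G hleft hright hbot htop f (hXode τ σ)
      τ τ' hτ.1 (le_trans hτ'.2 ht.2) hlt (hfτ ▸ hσK) ?_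
    rw [heqOn ⟨hτ'.1, hτ'.2⟩, hgτ']
    exact hσ'
  · refine ⟨heq, ?_⟩
    rw [← hfτ, heqOn ⟨hτ.1, hτ.2⟩, heq, hgτ']
  · exfalso
    refine no_return b T δ hb hδ G hleft hright hbot htop g (hXode τ' σ')
      τ' τ hτ'.1 (le_trans hτ.2 ht.2) hgt (hgτ' ▸ hσ'K) ?_
    rw [← heqOn ⟨hτ.1, hτ.2⟩, hfτ]
    exact hσ
end

section
/- Let G : ℝ × ℝ² → ℝ² be a C¹ vector field and let X(t;τ,y) denote the unique global solution of dX/dt = G(t,X) with X(τ;τ,y) = y. Let σ : [0,1] → ℝ² be a C¹ curve with |σ'(s)| = 1, and set ν(s) := (σ'₂(s), −σ'₁(s)). Fix τ and s, and suppose the vector-valued maps u ↦ V₁(u) := ∂_τX(u;τ,σ(s)) and u ↦ V₂(u) := ∂_sX(u;τ,σ(s)) exist, are differentiable, satisfy the variational equation V'(u) = D_xG(u, X(u;τ,σ(s))) · V(u), and satisfy the initial conditions V₁(τ) = −G(τ,σ(s)) and V₂(τ) = σ'(s). Then for all t ≥ τ, the Jacobian J₁(t;τ,s) := |det[V₁(t),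 V₂(t)]| satisfies J₁(t;τ,s) = |G(τ,σ(s)) · ν(s)| · exp(∫_τ^t div_x G(u, X(u;τ,σ(s))) du). -/
lemma trace2 (f : (ℝ × ℝ) →ₗ[ℝ] ℝ × ℝ) :
    LinearMap.trace ℝ (ℝ × ℝ) f = (f (1,0)).1 + (f (0,1)).2 := by
  rw [LinearMap.trace_eq_matrix_trace ℝ (Module.Basis.finTwoProd ℝ), Matrix.trace, Fin.sum_univ_two]
  simp [Matrix.diag, LinearMap.toMatrix_apply, Module.Basis.coe_finTwoProd_repr,
    Module.Basis.finTwoProd_zero, Module.Basis.finTwoProd_one]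

lemma clm_decomp (A : (ℝ × ℝ) →L[ℝ] ℝ × ℝ) (v : ℝ × ℝ) :
    A v = v.1 • A (1,0) + v.2 • A (0,1) := by
  have hv : v = v.1 • ((1:ℝ),(0:ℝ)) + v.2 • ((0:ℝ),(1:ℝ)) := by
    simp [Prod.ext_iff]
  conv_lhs => rw [hv]
  rw [map_add, map_smul, map_smul]

lemma hasDerivAt_fst {f : ℝ → ℝ × ℝ} {f' : ℝ × ℝ} {x : ℝ} (h : HasDerivAt f f' x) :
    HasDerivAt (fun u => (f u).1) f'.1 x := by
  simpa using (h.hasFDerivAt.fst).hasDerivAt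

lemma hasDerivAt_snd {f : ℝ → ℝ × ℝ} {f' : ℝ × ℝ} {x : ℝ} (h : HasDerivAt f f' x) :
    HasDerivAt (fun u => (f u).2) f'.2 x := by
  simpa using (h.hasFDerivAt.snd).hasDerivAt

/-- **Jacobian formula along characteristics.** Let `G` be a `C¹` field on `ℝ × ℝ²`, `X` its flow,
`σ` a `C¹` boundary curve parametrized by arclength with derivative `σ'` (so the normal is
`ν = (σ'₂, -σ'₁)`). If `V₁, V₂` solve the variational equation along `u ↦ X(u;τ,σ(s))` with
initial conditions `V₁(τ) = -G(τ,σ(s))` and `V₂(τ) = σ'(s)`, then for all `t ≥ τ` the Jacobian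
`J₁(t) = |det[V₁(t),V₂(t)]|` equals `|G(τ,σ(s))·ν(s)| · exp (∫_τ^t div G(u, X(u;τ,σ(s))) du)`. -/
theorem stmt5 (G : ℝ → ℝ × ℝ → ℝ × ℝ)
    (hG : ContDiff ℝ 1 fun p : ℝ × (ℝ × ℝ) => G p.1 p.2)
    (X : ℝ → ℝ → ℝ × ℝ → ℝ × ℝ)
    (hXinit : ∀ τ y, X τ τ y = y)
    (hXode : ∀ τ y t, HasDerivAt (fun u => X u τ y) (G t (X t τ y)) t)
    (σ : ℝ → ℝ × ℝ) (σ' : ℝ → ℝ × ℝ)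
    (hσ : ∀ s ∈ Set.Icc (0:ℝ) 1, HasDerivAt σ (σ' s) s)
    (hσ' : ∀ s ∈ Set.Icc (0:ℝ) 1, Real.sqrt ((σ' s).1 ^ 2 + (σ' s).2 ^ 2) = 1)
    (τ s : ℝ) (hs : s ∈ Set.Icc (0:ℝ) 1)
    (V₁ V₂ : ℝ → ℝ × ℝ)
    (hV₁ : ∀ u, HasDerivAt V₁ (fderiv ℝ (G u) (X u τ (σ s)) (V₁ u)) u)
    (hV₂ : ∀ u, HasDerivAt V₂ (fderiv ℝ (G u) (X u τ (σ s)) (V₂ u)) u)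
    (hV₁init : V₁ τ = -G τ (σ s))
    (hV₂init : V₂ τ = σ' s) :
    ∀ t, τ ≤ t →
      |(V₁ t).1 * (V₂ t).2 - (V₁ t).2 * (V₂ t).1| =
        |(G τ (σ s)).1 * (σ' s).2 - (G τ (σ s)).2 * (σ' s).1| *
          Real.exp (∫ u in τ..t,
            LinearMap.trace ℝ (ℝ × ℝ)
              ((fderiv ℝ (G u) (X u τ (σ s))) : (ℝ × ℝ) →ₗ[ℝ] ℝ × ℝ)) := by
  intro t ht
  set F : ℝ × (ℝ × ℝ) → ℝ × ℝ := fun p => G p.1 p.2 with hF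
  set A : ℝ → (ℝ × ℝ) →L[ℝ] ℝ × ℝ := fun u => fderiv ℝ (G u) (X u τ (σ s)) with hA
  -- fderiv formula via partial derivative
  have key : ∀ u x, fderiv ℝ (G u) x =
      (fderiv ℝ F (u, x)).comp (ContinuousLinearMap.inr ℝ ℝ (ℝ × ℝ)) := by
    intro u x
    have hF' : HasFDerivAt F (fderiv ℝ F (u, x)) (u, x) :=
      (hG.differentiable one_ne_zero (u, x)).hasFDerivAt
    have hincl : HasFDerivAt (fun y : ℝ × ℝ => ((u : ℝ), y))
        (ContinuousLinearMap.inr ℝ ℝ (ℝ × ℝ)) x := hasFDerivAt_prodMk_right u x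
    exact (hF'.comp x hincl).fderiv
  -- continuity of A
  have hXcont : Continuous fun u => X u τ (σ s) :=
    continuous_iff_continuousAt.2 fun u => (hXode τ (σ s) u).continuousAt
  have hBcont : Continuous fun u => fderiv ℝ F (u, X u τ (σ s)) :=
    (hG.continuous_fderiv one_ne_zero).comp (continuous_id.prodMk hXcont)
  have hAcont : Continuous A := by
    have : Continuous fun u => (fderiv ℝ F (u, X u τ (σ s))).comp
        (ContinuousLinearMap.inr ℝ ℝ (ℝ × ℝ)) :=
      ((ContinuousLinearMap.compL ℝ (ℝ × ℝ) (ℝ × (ℝ × ℝ)) (ℝ × ℝ)).continuous.comp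
        hBcont).clm_apply continuous_const
    simpa only [hA, key] using this
  set tr : ℝ → ℝ := fun u => (A u (1,0)).1 + (A u (0,1)).2 with htrdef
  have htr : Continuous tr :=
    ((hAcont.clm_apply continuous_const).fst).add ((hAcont.clm_apply continuous_const).snd)
  set D : ℝ → ℝ := fun u => (V₁ u).1 * (V₂ u).2 - (V₁ u).2 * (V₂ u).1 with hDdef
  have hD : ∀ u, HasDerivAt D (tr u * D u) u := by
    intro u
    have h1 := hV₁ u
    have h2 := hV₂ u
    have hd : HasDerivAt D
        ((A u (V₁ u)).1 * (V₂ u).2 + (V₁ u).1 * (A u (V₂ u)).2 -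
          ((A u (V₁ u)).2 * (V₂ u).1 + (V₁ u).2 * (A u (V₂ u)).1)) u :=
      (((hasDerivAt_fst h1).mul (hasDerivAt_snd h2)).sub
        ((hasDerivAt_snd h1).mul (hasDerivAt_fst h2)))
    convert hd using 1
    rw [clm_decomp (A u) (V₁ u), clm_decomp (A u) (V₂ u)]
    simp only [htrdef, hDdef, Prod.fst_add, Prod.snd_add, Prod.smul_fst, Prod.smul_snd,
      smul_eq_mul]
    ring
  set I : ℝ → ℝ := fun v => ∫ u in τ..v, tr u with hIdef
  have hI : ∀ u, HasDerivAt I (tr u) u := fun u =>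
    (htr.integral_hasStrictDerivAt τ u).hasDerivAt
  -- E := D * exp(-I) is constant
  set E : ℝ → ℝ := fun u => D u * Real.exp (-(I u)) with hEdef
  have hE : ∀ u, HasDerivAt E 0 u := by
    intro u
    have h := (hD u).mul (((hI u).neg).exp)
    have h0 : tr u * D u * Real.exp ((-I) u) + D u * (Real.exp ((-I) u) * -tr u) = 0 := by
      simp only [Pi.neg_apply]; ring
    rw [h0] at h
    exact h
  have hconst : E t = E τ := by
    have hdiff : Differentiable ℝ E := fun u => (hE u).differentiableAt
    have hderiv : ∀ u, deriv E u = 0 := fun u => (hE u).deriv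
    exact (is_const_of_deriv_eq_zero hdiff hderiv) t τ
  have hIτ : I τ = 0 := by simp [hIdef]
  have hDt : D t = D τ * Real.exp (I t) := by
    have h : D t * Real.exp (-(I t)) = D τ := by
      simpa [hEdef, hIτ] using hconst
    have h2 := congrArg (fun z => z * Real.exp (I t)) h
    simp only [mul_assoc, ← Real.exp_add, neg_add_cancel, Real.exp_zero, mul_one] at h2
    exact h2
  have hDτ : D τ = -((G τ (σ s)).1 * (σ' s).2 - (G τ (σ s)).2 * (σ' s).1) := by
    have hre : D τ = (V₁ τ).1 * (V₂ τ).2 - (V₁ τ).2 * (V₂ τ).1 := rfl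
    rw [hre, hV₁init, hV₂init, Prod.fst_neg, Prod.snd_neg]; ring
  have htreq : ∀ u, LinearMap.trace ℝ (ℝ × ℝ)
      ((fderiv ℝ (G u) (X u τ (σ s))) : (ℝ × ℝ) →ₗ[ℝ] ℝ × ℝ) = tr u := fun u =>
    trace2 _
  calc |D t| = |D τ * Real.exp (I t)| := by rw [hDt]
    _ = |D τ| * Real.exp (I t) := by
        rw [abs_mul, abs_of_pos (Real.exp_pos _)]
    _ = |(G τ (σ s)).1 * (σ' s).2 - (G τ (σ s)).2 * (σ' s).1| * Real.exp (I t) := by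
        rw [hDτ, abs_neg]
    _ = _ := by
        congr 1
        exact congrArg Real.exp
          (intervalIntegral.integral_congr (μ := MeasureTheory.volume)
            (a := τ) (b := t) fun u _ => (htreq u).symm)
end

section
/- Consider the lagrangian scheme: integers K, M, L ≥ 1; steps δt, δσ, δx > 0 with t_k = k·δt; data N_j (1 ≤ j ≤ M), f_j^k (1 ≤ j ≤ M, 0 ≤ k ≤ K+1), β¹_{i,j} (i ≥ 1, 1 ≤ j ≤ M), β²_{l,m} and ρ₂⁰(l,m) (1 ≤ l,m ≤ L). Set ρ₂^k(l,m) = ρ₂⁰(l,m) for all k, and define ρ₁^k(i,j) (1 ≤ i ≤ k ≤ K+1, 1 ≤ j ≤ M) recursively by ρ₁^{k+1}(i,j) = ρ₁^k(i,j) for 1 ≤ i ≤ k and ρ₁^{k+1}(k+1,j) = N_j·B^{k+1} + f_j^{k+1}, where B^{k+1} = Σ_{i=1}^{k} Σ_{j'=1}^{M} β¹_{i,j'} ρ₁^{k+1}(i,j') δt δσ + Σ_{l,m=1}^{L} β²_{l,m} ρ₂⁰(l,m) (δx)². If ρ₂⁰(l,m) ≥ 0, N_j ≥ 0, f_j^k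 ≥ 0, β¹_{i,j} ≥ 0 and β²_{l,m} ≥ 0 for all indices, then ρ₁^k(i,j) ≥ 0 for all 1 ≤ i ≤ k ≤ K+1 and 1 ≤ j ≤ M. -/
/-- **Positivity of the lagrangian scheme.** With nonnegative data `ρ₂⁰, N, f, β¹, β²`, the
values `ρ₁^k(i,j)` produced by the lagrangian scheme are nonnegative for all
`1 ≤ i ≤ k ≤ K+1`, `1 ≤ j ≤ M`. -/
theorem stmt9 (K M L : ℕ) (hK : 1 ≤ K) (hM : 1 ≤ M) (hL : 1 ≤ L)
    (δt δσ δx : ℝ) (hδt : 0 < δt) (hδσ : 0 < δσ) (hδx : 0 < δx)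
    (N : ℕ → ℝ) (f : ℕ → ℕ → ℝ) (β₁ : ℕ → ℕ → ℝ) (β₂ ρ₂0 : ℕ → ℕ → ℝ)
    (ρ₁ : ℕ → ℕ → ℕ → ℝ)
    (hrec : ∀ k ≤ K, ∀ i, 1 ≤ i → i ≤ k → ∀ j, 1 ≤ j → j ≤ M →
      ρ₁ (k + 1) i j = ρ₁ k i j)
    (hbdry : ∀ k ≤ K, ∀ j, 1 ≤ j → j ≤ M →
      ρ₁ (k + 1) (k + 1) j =
        N j * ((∑ i ∈ Finset.Icc 1 k, ∑ j' ∈ Finset.Icc 1 M,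
                  β₁ i j' * ρ₁ (k + 1) i j' * δt * δσ) +
               ∑ l ∈ Finset.Icc 1 L, ∑ m ∈ Finset.Icc 1 L,
                  β₂ l m * ρ₂0 l m * δx ^ 2) + f j (k + 1))
    (hρ₂0 : ∀ l m, 1 ≤ l → l ≤ L → 1 ≤ m → m ≤ L → 0 ≤ ρ₂0 l m)
    (hN : ∀ j, 1 ≤ j → j ≤ M → 0 ≤ N j)
    (hf : ∀ j k, 1 ≤ j → j ≤ M → k ≤ K + 1 → 0 ≤ f j k)
    (hβ₁ : ∀ i j, 1 ≤ i → 1 ≤ j → j ≤ M → 0 ≤ β₁ i j)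
    (hβ₂ : ∀ l m, 1 ≤ l → l ≤ L → 1 ≤ m → m ≤ L → 0 ≤ β₂ l m) :
    ∀ k i j, 1 ≤ i → i ≤ k → k ≤ K + 1 → 1 ≤ j → j ≤ M → 0 ≤ ρ₁ k i j := by
  intro k
  induction k with
  | zero => intro i j hi hik _ _ _; omega
  | succ k ih =>
    intro i j hi hik hkK hj hjM
    have hkK' : k ≤ K := by omega
    rcases Nat.lt_or_ge i (k + 1) with hlt | hge
    · have hik' : i ≤ k := by omega
      rw [hrec k hkK' i hi hik' j hj hjM]
      exact ih i j hi hik' (by omega) hj hjM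
    · have : i = k + 1 := by omega
      subst this
      rw [hbdry k hkK' j hj hjM]
      have h1 : 0 ≤ ∑ i ∈ Finset.Icc 1 k, ∑ j' ∈ Finset.Icc 1 M,
          β₁ i j' * ρ₁ (k + 1) i j' * δt * δσ := by
        apply Finset.sum_nonneg; intro a ha
        apply Finset.sum_nonneg; intro b hb
        simp only [Finset.mem_Icc] at ha hb
        have hρ : 0 ≤ ρ₁ (k + 1) a b := by
          rw [hrec k hkK' a ha.1 ha.2 b hb.1 hb.2]
          exact ih a b ha.1 ha.2 (by omega) hb.1 hb.2
        have := hβ₁ a b ha.1 hb.1 hb.2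
        positivity
      have h2 : 0 ≤ ∑ l ∈ Finset.Icc 1 L, ∑ m ∈ Finset.Icc 1 L,
          β₂ l m * ρ₂0 l m * δx ^ 2 := by
        apply Finset.sum_nonneg; intro a ha
        apply Finset.sum_nonneg; intro b hb
        simp only [Finset.mem_Icc] at ha hb
        have := hβ₂ a b ha.1 ha.2 hb.1 hb.2
        have := hρ₂0 a b ha.1 ha.2 hb.1 hb.2
        positivity
      have := hN j hj hjM
      have := hf j (k + 1) hj hjM hkK
      positivity
end

section
/- Consider the lagrangian scheme: integers K, M, L ≥ 1; steps δt, δσ, δx > 0 with t_k = k·δt; data N_j (1 ≤ j ≤ M), f_j^k (1 ≤ j ≤ M, 0 ≤ k ≤ K+1), β¹_{i,j} (i ≥ 1, 1 ≤ j ≤ M), β²_{l,m} and ρ₂⁰(l,m) (1 ≤ l,m ≤ L). Set ρ₂^k(l,m) = ρ₂⁰(l,m) for all k, and define ρ₁^k(i,j) (1 ≤ i ≤ k ≤ K+1, 1 ≤ j ≤ M) recursively by ρ₁^{k+1}(i,j) = ρ₁^k(i,j) for 1 ≤ i ≤ k and ρ₁^{k+1}(k+1,j) = N_j·B^{k+1}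 + f_j^{k+1}, where B^{k+1} = Σ_{i=1}^{k} Σ_{j'=1}^{M} β¹_{i,j'} ρ₁^{k+1}(i,j') δt δσ + Σ_{l,m=1}^{L} β²_{l,m} ρ₂⁰(l,m) (δx)². Suppose N_j ≥ 0, |β¹_{i,j}| ≤ B_β and |β²_{l,m}| ≤ B_β for a constant B_β > 0, Σ_{j=1}^M N_j δσ ≤ ν_h for a constant ν_h > 0, and Σ_{j=1}^M |f_j^k| δσ ≤ φ_h for every k. Then for every 1 ≤ k ≤ K+1: Σ_{i=1}^{k} Σ_{j=1}^{M} |ρ₁^k(i,j)| δt δσ ≤ e^{t_k·B_β·ν_h}·( Σ_{l,m=1}^{L} |ρ₂⁰(l,m)| (δx)² + φ_h/(B_β·ν_h) ). -/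
/-- **Discrete L¹ a priori estimate for the lagrangian scheme.** Under the bounds
`N_j ≥ 0`, `|β¹|,|β²| ≤ B_β`, `Σ_j N_j δσ ≤ ν_h`, `Σ_j |f_j^k| δσ ≤ φ_h`, the discrete L¹ norm
of `ρ₁` satisfies
`Σ_{i=1}^k Σ_{j=1}^M |ρ₁^k(i,j)| δt δσ ≤ e^{t_k B_β ν_h} (Σ_{l,m} |ρ₂⁰(l,m)| (δx)² + φ_h/(B_β ν_h))`. -/
theorem stmt10 (K M L : ℕ) (hK : 1 ≤ K) (hM : 1 ≤ M) (hL : 1 ≤ L)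
    (δt δσ δx : ℝ) (hδt : 0 < δt) (hδσ : 0 < δσ) (hδx : 0 < δx)
    (N : ℕ → ℝ) (f : ℕ → ℕ → ℝ) (β₁ : ℕ → ℕ → ℝ) (β₂ ρ₂0 : ℕ → ℕ → ℝ)
    (ρ₁ : ℕ → ℕ → ℕ → ℝ)
    (hrec : ∀ k ≤ K, ∀ i, 1 ≤ i → i ≤ k → ∀ j, 1 ≤ j → j ≤ M →
      ρ₁ (k + 1) i j = ρ₁ k i j)
    (hbdry : ∀ k ≤ K, ∀ j, 1 ≤ j → j ≤ M →
      ρ₁ (k + 1) (k + 1) j =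
        N j * ((∑ i ∈ Finset.Icc 1 k, ∑ j' ∈ Finset.Icc 1 M,
                  β₁ i j' * ρ₁ (k + 1) i j' * δt * δσ) +
               ∑ l ∈ Finset.Icc 1 L, ∑ m ∈ Finset.Icc 1 L,
                  β₂ l m * ρ₂0 l m * δx ^ 2) + f j (k + 1))
    (Bβ νh φh : ℝ) (hBβ : 0 < Bβ) (hνh : 0 < νh)
    (hN : ∀ j, 1 ≤ j → j ≤ M → 0 ≤ N j)
    (hβ₁ : ∀ i j, 1 ≤ i → 1 ≤ j → j ≤ M → |β₁ i j| ≤ Bβ)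
    (hβ₂ : ∀ l m, 1 ≤ l → l ≤ L → 1 ≤ m → m ≤ L → |β₂ l m| ≤ Bβ)
    (hNsum : (∑ j ∈ Finset.Icc 1 M, N j * δσ) ≤ νh)
    (hfsum : ∀ k ≤ K + 1, (∑ j ∈ Finset.Icc 1 M, |f j k| * δσ) ≤ φh) :
    ∀ k, 1 ≤ k → k ≤ K + 1 →
      (∑ i ∈ Finset.Icc 1 k, ∑ j ∈ Finset.Icc 1 M, |ρ₁ k i j| * δt * δσ) ≤
        Real.exp ((k : ℝ) * δt * Bβ * νh) *
          ((∑ l ∈ Finset.Icc 1 L, ∑ m ∈ Finset.Icc 1 L, |ρ₂0 l m| * δx ^ 2) +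
            φh / (Bβ * νh)) := by
  have hBν : 0 < Bβ * νh := mul_pos hBβ hνh
  have hφ : 0 ≤ φh := le_trans
    (Finset.sum_nonneg fun j _ => mul_nonneg (abs_nonneg _) hδσ.le) (hfsum 0 (by omega))
  set C := ∑ l ∈ Finset.Icc 1 L, ∑ m ∈ Finset.Icc 1 L, |ρ₂0 l m| * δx ^ 2 with hC_def
  have hC0 : 0 ≤ C :=
    Finset.sum_nonneg fun l _ => Finset.sum_nonneg fun m _ =>
      mul_nonneg (abs_nonneg _) (by positivity)
  set D := C + φh / (Bβ * νh) with hD_def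
  have hD0 : 0 ≤ D := add_nonneg hC0 (div_nonneg hφ hBν.le)
  have key : ∀ k, k ≤ K + 1 →
      (∑ i ∈ Finset.Icc 1 k, ∑ j ∈ Finset.Icc 1 M, |ρ₁ k i j| * δt * δσ) + D ≤
        Real.exp ((k : ℝ) * δt * Bβ * νh) * D := by
    intro k
    induction k with
    | zero =>
        intro _
        have he : Finset.Icc 1 0 = (∅ : Finset ℕ) := by simp
        rw [he, Finset.sum_empty, zero_add]
        simp [Real.exp_zero]
    | succ k ih =>
        intro hk1
        have hkK : k ≤ K := by omega
        have ihk := ih (by omega)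
        set S := ∑ i ∈ Finset.Icc 1 k, ∑ j ∈ Finset.Icc 1 M, |ρ₁ k i j| * δt * δσ with hS_def
        have hS0 : 0 ≤ S :=
          Finset.sum_nonneg fun _ _ => Finset.sum_nonneg fun _ _ =>
            mul_nonneg (mul_nonneg (abs_nonneg _) hδt.le) hδσ.le
        set B := (∑ i ∈ Finset.Icc 1 k, ∑ j' ∈ Finset.Icc 1 M,
            β₁ i j' * ρ₁ (k + 1) i j' * δt * δσ) +
            ∑ l ∈ Finset.Icc 1 L, ∑ m ∈ Finset.Icc 1 L, β₂ l m * ρ₂0 l m * δx ^ 2 with hB_def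
        have hB1 : |∑ i ∈ Finset.Icc 1 k, ∑ j' ∈ Finset.Icc 1 M,
            β₁ i j' * ρ₁ (k + 1) i j' * δt * δσ| ≤ Bβ * S := by
          calc |∑ i ∈ Finset.Icc 1 k, ∑ j' ∈ Finset.Icc 1 M,
              β₁ i j' * ρ₁ (k + 1) i j' * δt * δσ|
              ≤ ∑ i ∈ Finset.Icc 1 k, ∑ j' ∈ Finset.Icc 1 M,
                  |β₁ i j' * ρ₁ (k + 1) i j' * δt * δσ| := by
                refine (Finset.abs_sum_le_sum_abs _ _).trans ?_
                exact Finset.sum_le_sum fun i _ => Finset.abs_sum_le_sum_abs _ _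
            _ ≤ ∑ i ∈ Finset.Icc 1 k, ∑ j' ∈ Finset.Icc 1 M,
                  Bβ * (|ρ₁ k i j'| * δt * δσ) := by
                refine Finset.sum_le_sum fun i hi => Finset.sum_le_sum fun j' hj' => ?_
                rw [Finset.mem_Icc] at hi hj'
                rw [hrec k hkK i hi.1 hi.2 j' hj'.1 hj'.2]
                have heq : |β₁ i j' * ρ₁ k i j' * δt * δσ|
                    = |β₁ i j'| * (|ρ₁ k i j'| * δt * δσ) := by
                  rw [abs_mul, abs_mul, abs_mul, abs_of_pos hδt, abs_of_pos hδσ]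
                  ring
                rw [heq]
                exact mul_le_mul_of_nonneg_right (hβ₁ i j' hi.1 hj'.1 hj'.2)
                  (by positivity)
            _ = Bβ * S := by rw [hS_def]; simp [Finset.mul_sum]
        have hB2 : |∑ l ∈ Finset.Icc 1 L, ∑ m ∈ Finset.Icc 1 L,
            β₂ l m * ρ₂0 l m * δx ^ 2| ≤ Bβ * C := by
          calc |∑ l ∈ Finset.Icc 1 L, ∑ m ∈ Finset.Icc 1 L, β₂ l m * ρ₂0 l m * δx ^ 2|
              ≤ ∑ l ∈ Finset.Icc 1 L, ∑ m ∈ Finset.Icc 1 L,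
                  |β₂ l m * ρ₂0 l m * δx ^ 2| := by
                refine (Finset.abs_sum_le_sum_abs _ _).trans ?_
                exact Finset.sum_le_sum fun l _ => Finset.abs_sum_le_sum_abs _ _
            _ ≤ ∑ l ∈ Finset.Icc 1 L, ∑ m ∈ Finset.Icc 1 L,
                  Bβ * (|ρ₂0 l m| * δx ^ 2) := by
                refine Finset.sum_le_sum fun l hl => Finset.sum_le_sum fun m hm => ?_
                rw [Finset.mem_Icc] at hl hm
                have heq : |β₂ l m * ρ₂0 l m * δx ^ 2|
                    = |β₂ l m| * (|ρ₂0 l m| * δx ^ 2) := by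
                  rw [abs_mul, abs_mul, abs_of_nonneg (sq_nonneg δx)]
                  ring
                rw [heq]
                exact mul_le_mul_of_nonneg_right (hβ₂ l m hl.1 hl.2 hm.1 hm.2)
                  (by positivity)
            _ = Bβ * C := by rw [hC_def]; simp [Finset.mul_sum]
        have hBabs : |B| ≤ Bβ * (S + C) := by
          rw [hB_def, mul_add]
          exact (abs_add_le _ _).trans (add_le_add hB1 hB2)
        have row_le : (∑ j ∈ Finset.Icc 1 M, |ρ₁ (k + 1) (k + 1) j| * δt * δσ)
            ≤ νh * (δt * |B|) + φh * δt := by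
          have h1 : (∑ j ∈ Finset.Icc 1 M, |ρ₁ (k + 1) (k + 1) j| * δt * δσ)
              ≤ ∑ j ∈ Finset.Icc 1 M,
                  ((N j * δσ) * (δt * |B|) + (|f j (k + 1)| * δσ) * δt) := by
            refine Finset.sum_le_sum fun j hj => ?_
            rw [Finset.mem_Icc] at hj
            rw [hbdry k hkK j hj.1 hj.2]
            have h2 : |N j * B + f j (k + 1)| ≤ N j * |B| + |f j (k + 1)| := by
              refine (abs_add_le _ _).trans ?_
              rw [abs_mul, abs_of_nonneg (hN j hj.1 hj.2)]
            calc |N j * B + f j (k + 1)| * δt * δσ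
                ≤ (N j * |B| + |f j (k + 1)|) * δt * δσ := by
                  have := mul_le_mul_of_nonneg_right
                    (mul_le_mul_of_nonneg_right h2 hδt.le) hδσ.le
                  exact this
              _ = (N j * δσ) * (δt * |B|) + (|f j (k + 1)| * δσ) * δt := by ring
          refine h1.trans ?_
          have e : (∑ j ∈ Finset.Icc 1 M,
              ((N j * δσ) * (δt * |B|) + (|f j (k + 1)| * δσ) * δt))
              = (∑ j ∈ Finset.Icc 1 M, N j * δσ) * (δt * |B|)
                + (∑ j ∈ Finset.Icc 1 M, |f j (k + 1)| * δσ) * δt := by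
            rw [Finset.sum_add_distrib, Finset.sum_mul, Finset.sum_mul]
          rw [e]
          refine add_le_add ?_ ?_
          · exact mul_le_mul_of_nonneg_right hNsum
              (mul_nonneg hδt.le (abs_nonneg _))
          · exact mul_le_mul_of_nonneg_right (hfsum (k + 1) (by omega)) hδt.le
        have hsplit : (∑ i ∈ Finset.Icc 1 (k + 1), ∑ j ∈ Finset.Icc 1 M,
            |ρ₁ (k + 1) i j| * δt * δσ)
            = S + ∑ j ∈ Finset.Icc 1 M, |ρ₁ (k + 1) (k + 1) j| * δt * δσ := by
          rw [Finset.sum_Icc_succ_top (by omega : 1 ≤ k + 1)]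
          congr 1
          rw [hS_def]
          refine Finset.sum_congr rfl fun i hi => Finset.sum_congr rfl fun j hj => ?_
          rw [Finset.mem_Icc] at hi hj
          rw [hrec k hkK i hi.1 hi.2 j hj.1 hj.2]
        have hrow2 : (∑ j ∈ Finset.Icc 1 M, |ρ₁ (k + 1) (k + 1) j| * δt * δσ)
            ≤ δt * Bβ * νh * S + δt * Bβ * νh * D := by
          refine row_le.trans ?_
          have h3 : νh * (δt * |B|) ≤ νh * (δt * (Bβ * (S + C))) := by
            refine mul_le_mul_of_nonneg_left
              (mul_le_mul_of_nonneg_left hBabs hδt.le) hνh.le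
          have h4 : δt * Bβ * νh * D = δt * Bβ * νh * C + φh * δt := by
            rw [hD_def]
            field_simp
          nlinarith [h3, h4]
        have hone : 1 + δt * Bβ * νh ≤ Real.exp (δt * Bβ * νh) := by
          have := Real.add_one_le_exp (δt * Bβ * νh)
          linarith
        have hstep : (∑ i ∈ Finset.Icc 1 (k + 1), ∑ j ∈ Finset.Icc 1 M,
            |ρ₁ (k + 1) i j| * δt * δσ) + D
            ≤ (1 + δt * Bβ * νh) * (S + D) := by
          rw [hsplit]
          nlinarith [hrow2]
        have hSD0 : 0 ≤ S + D := add_nonneg hS0 hD0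
        calc (∑ i ∈ Finset.Icc 1 (k + 1), ∑ j ∈ Finset.Icc 1 M,
            |ρ₁ (k + 1) i j| * δt * δσ) + D
            ≤ (1 + δt * Bβ * νh) * (S + D) := hstep
          _ ≤ Real.exp (δt * Bβ * νh) * (S + D) :=
              mul_le_mul_of_nonneg_right hone hSD0
          _ ≤ Real.exp (δt * Bβ * νh) * (Real.exp ((k : ℝ) * δt * Bβ * νh) * D) :=
              mul_le_mul_of_nonneg_left ihk (Real.exp_pos _).le
          _ = Real.exp (((k : ℕ) + 1 : ℝ) * δt * Bβ * νh) * D := by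
              rw [← mul_assoc, ← Real.exp_add]
              ring_nf
          _ = Real.exp (((k + 1 : ℕ) : ℝ) * δt * Bβ * νh) * D := by push_cast; ring_nf
  intro k hk1 hk2
  have := key k hk2
  linarith [hD0]
end

section
/- Let K, M, L ≥ 1 be integers, δt, δσ, δx > 0 with t_k = k·δt ≤ T for k ≤ K+1, and h > 0. Let N_j ≥ 0 with Σ_{j=1}^M N_j δσ ≤ ν_h (ν_h > 0), |β¹_{i,j}| ≤ B_β and |β²_{l,m}| ≤ B_β (B_β > 0). Let e₂(l,m) (1 ≤ l,m ≤ L) satisfy Σ_{l,m=1}^{L} |e₂(l,m)| (δx)² ≤ C₂·h, and let r_j^k satisfy Σ_{j=1}^{M} |r_j^k| δσ ≤ C_r·h for every k. Define e^k(i,j) (1 ≤ i ≤ k ≤ K+1, 1 ≤ j ≤ M) recursively by e^{k+1}(i,j) = e^k(i,j) for 1 ≤ i ≤ k and e^{k+1}(k+1,j) = N_j·E^{k+1} + r_j^{k+1}, where E^{k+1} = Σ_{i=1}^{k} Σ_{j'=1}^{M} β¹_{i,j'} e^{k+1}(i,j') δt δσ + Σ_{l,m=1}^{L} β²_{l,m}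 e₂(l,m) (δx)². Then for every 1 ≤ k ≤ K+1: Σ_{i=1}^{k} Σ_{j=1}^{M} |e^k(i,j)| δt δσ ≤ h · e^{B_β·ν_h·T} · ( C₂ + C_r/(B_β·ν_h) ). -/
set_option maxHeartbeats 1000000 in
/-- **Error propagation for the lagrangian scheme.** If the initial-data error satisfies
`Σ_{l,m} |e₂(l,m)| (δx)² ≤ C₂ h` and the truncation error satisfies `Σ_j |r_j^k| δσ ≤ C_r h`,
then the recursively defined scheme error `e^k(i,j)` satisfies, for `1 ≤ k ≤ K+1`,
`Σ_{i=1}^k Σ_{j=1}^M |e^k(i,j)| δt δσ ≤ h e^{B_β ν_h T} (C₂ + C_r/(B_β ν_h))`. -/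
theorem stmt12 (K M L : ℕ) (hK : 1 ≤ K) (hM : 1 ≤ M) (hL : 1 ≤ L)
    (δt δσ δx h T : ℝ) (hδt : 0 < δt) (hδσ : 0 < δσ) (hδx : 0 < δx) (hh : 0 < h)
    (hT : ((K : ℝ) + 1) * δt ≤ T)
    (Bβ νh C₂ Cr : ℝ) (hBβ : 0 < Bβ) (hνh : 0 < νh)
    (N : ℕ → ℝ) (β₁ : ℕ → ℕ → ℝ) (β₂ : ℕ → ℕ → ℝ) (e₂ : ℕ → ℕ → ℝ) (r : ℕ → ℕ → ℝ)
    (hN : ∀ j, 1 ≤ j → j ≤ M → 0 ≤ N j)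
    (hNsum : (∑ j ∈ Finset.Icc 1 M, N j * δσ) ≤ νh)
    (hβ₁ : ∀ i j, 1 ≤ i → 1 ≤ j → j ≤ M → |β₁ i j| ≤ Bβ)
    (hβ₂ : ∀ l m, 1 ≤ l → l ≤ L → 1 ≤ m → m ≤ L → |β₂ l m| ≤ Bβ)
    (he₂ : (∑ l ∈ Finset.Icc 1 L, ∑ m ∈ Finset.Icc 1 L, |e₂ l m| * δx ^ 2) ≤ C₂ * h)
    (hr : ∀ k ≤ K + 1, (∑ j ∈ Finset.Icc 1 M, |r j k| * δσ) ≤ Cr * h)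
    (e : ℕ → ℕ → ℕ → ℝ)
    (hrec : ∀ k ≤ K, ∀ i, 1 ≤ i → i ≤ k → ∀ j, 1 ≤ j → j ≤ M →
      e (k + 1) i j = e k i j)
    (hbdry : ∀ k ≤ K, ∀ j, 1 ≤ j → j ≤ M →
      e (k + 1) (k + 1) j =
        N j * ((∑ i ∈ Finset.Icc 1 k, ∑ j' ∈ Finset.Icc 1 M,
                  β₁ i j' * e (k + 1) i j' * δt * δσ) +
               ∑ l ∈ Finset.Icc 1 L, ∑ m ∈ Finset.Icc 1 L,
                  β₂ l m * e₂ l m * δx ^ 2) + r j (k + 1)) :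
    ∀ k, 1 ≤ k → k ≤ K + 1 →
      (∑ i ∈ Finset.Icc 1 k, ∑ j ∈ Finset.Icc 1 M, |e k i j| * δt * δσ) ≤
        h * Real.exp (Bβ * νh * T) * (C₂ + Cr / (Bβ * νh)) := by
  have ha : 0 < Bβ * νh := mul_pos hBβ hνh
  set a := Bβ * νh with hadef
  have hC₂ : 0 ≤ C₂ := by
    have h0 : (0:ℝ) ≤ ∑ l ∈ Finset.Icc 1 L, ∑ m ∈ Finset.Icc 1 L, |e₂ l m| * δx ^ 2 := by
      positivity
    nlinarith
  have hCr : 0 ≤ Cr := by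
    have h0 : (0:ℝ) ≤ ∑ j ∈ Finset.Icc 1 M, |r j 1| * δσ := by positivity
    have := hr 1 (by omega)
    nlinarith
  set C := h * (C₂ + Cr / a) with hCdef
  have hC : 0 ≤ C := by
    have h1 : 0 ≤ Cr / a := div_nonneg hCr ha.le
    have h2 : 0 ≤ C₂ + Cr / a := by linarith
    exact mul_nonneg hh.le h2
  set S : ℕ → ℝ := fun k => ∑ i ∈ Finset.Icc 1 k, ∑ j ∈ Finset.Icc 1 M, |e k i j| * δt * δσ
    with hSdef
  have hSnonneg : ∀ k, 0 ≤ S k := by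
    intro k; simp only [hSdef]; positivity
  have h1a : (0:ℝ) ≤ 1 + a * δt := by nlinarith
  have key : ∀ k, k ≤ K + 1 → S k ≤ C * ((1 + a * δt) ^ k - 1) := by
    intro k
    induction k with
    | zero => intro _; simp [hSdef]
    | succ n ih =>
      intro hn1
      have hnK : n ≤ K := by omega
      have ihn := ih (by omega)
      have hsplit : S (n+1) =
          (∑ i ∈ Finset.Icc 1 n, ∑ j ∈ Finset.Icc 1 M, |e (n+1) i j| * δt * δσ)
          + ∑ j ∈ Finset.Icc 1 M, |e (n+1) (n+1) j| * δt * δσ := by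
        simp only [hSdef]
        rw [Finset.sum_Icc_succ_top (by omega : 1 ≤ n + 1)]
      have hfirst : (∑ i ∈ Finset.Icc 1 n, ∑ j ∈ Finset.Icc 1 M,
          |e (n+1) i j| * δt * δσ) = S n := by
        apply Finset.sum_congr rfl
        intro i hi
        apply Finset.sum_congr rfl
        intro j hj
        simp only [Finset.mem_Icc] at hi hj
        rw [hrec n hnK i hi.1 hi.2 j hj.1 hj.2]
      set E := (∑ i ∈ Finset.Icc 1 n, ∑ j' ∈ Finset.Icc 1 M,
            β₁ i j' * e (n+1) i j' * δt * δσ)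
          + ∑ l ∈ Finset.Icc 1 L, ∑ m ∈ Finset.Icc 1 L, β₂ l m * e₂ l m * δx ^ 2
        with hEdef
      have hE1 : |∑ i ∈ Finset.Icc 1 n, ∑ j' ∈ Finset.Icc 1 M,
          β₁ i j' * e (n+1) i j' * δt * δσ| ≤ Bβ * S n := by
        calc |∑ i ∈ Finset.Icc 1 n, ∑ j' ∈ Finset.Icc 1 M,
              β₁ i j' * e (n+1) i j' * δt * δσ|
            ≤ ∑ i ∈ Finset.Icc 1 n, ∑ j' ∈ Finset.Icc 1 M,
              Bβ * (|e (n+1) i j'| * δt * δσ) := by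
              refine (Finset.abs_sum_le_sum_abs _ _).trans ?_
              apply Finset.sum_le_sum
              intro i hi
              refine (Finset.abs_sum_le_sum_abs _ _).trans ?_
              apply Finset.sum_le_sum
              intro j' hj'
              simp only [Finset.mem_Icc] at hi hj'
              have hb := hβ₁ i j' hi.1 hj'.1 hj'.2
              rw [abs_mul, abs_mul, abs_mul, abs_of_pos hδt, abs_of_pos hδσ]
              have h2 := mul_le_mul_of_nonneg_right hb
                (show (0:ℝ) ≤ |e (n+1) i j'| * δt * δσ by positivity)
              linarith
          _ = Bβ * S n := by
              rw [← hfirst]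
              simp only [Finset.mul_sum]
      have hE2 : |∑ l ∈ Finset.Icc 1 L, ∑ m ∈ Finset.Icc 1 L,
          β₂ l m * e₂ l m * δx ^ 2| ≤ Bβ * (C₂ * h) := by
        calc |∑ l ∈ Finset.Icc 1 L, ∑ m ∈ Finset.Icc 1 L, β₂ l m * e₂ l m * δx ^ 2|
            ≤ ∑ l ∈ Finset.Icc 1 L, ∑ m ∈ Finset.Icc 1 L,
              Bβ * (|e₂ l m| * δx ^ 2) := by
              refine (Finset.abs_sum_le_sum_abs _ _).trans ?_
              apply Finset.sum_le_sum
              intro l hl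
              refine (Finset.abs_sum_le_sum_abs _ _).trans ?_
              apply Finset.sum_le_sum
              intro m hm
              simp only [Finset.mem_Icc] at hl hm
              have hb := hβ₂ l m hl.1 hl.2 hm.1 hm.2
              rw [abs_mul, abs_mul, abs_pow, abs_of_pos hδx]
              have h2 := mul_le_mul_of_nonneg_right hb
                (show (0:ℝ) ≤ |e₂ l m| * δx ^ 2 by positivity)
              linarith
          _ = Bβ * ∑ l ∈ Finset.Icc 1 L, ∑ m ∈ Finset.Icc 1 L, |e₂ l m| * δx ^ 2 := by
              simp only [Finset.mul_sum]
          _ ≤ Bβ * (C₂ * h) := by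
              have := mul_le_mul_of_nonneg_left he₂ hBβ.le
              linarith
      have hE : |E| ≤ Bβ * S n + Bβ * (C₂ * h) := by
        rw [hEdef]
        exact (abs_add_le _ _).trans (add_le_add hE1 hE2)
      have hsec : (∑ j ∈ Finset.Icc 1 M, |e (n+1) (n+1) j| * δt * δσ) ≤
          |E| * δt * (∑ j ∈ Finset.Icc 1 M, N j * δσ)
          + δt * (∑ j ∈ Finset.Icc 1 M, |r j (n+1)| * δσ) := by
        rw [Finset.mul_sum, Finset.mul_sum, ← Finset.sum_add_distrib]
        apply Finset.sum_le_sum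
        intro j hj
        simp only [Finset.mem_Icc] at hj
        rw [hbdry n hnK j hj.1 hj.2, ← hEdef]
        have hNj := hN j hj.1 hj.2
        have habs : |N j * E + r j (n+1)| ≤ N j * |E| + |r j (n+1)| := by
          calc |N j * E + r j (n+1)| ≤ |N j * E| + |r j (n+1)| := abs_add_le _ _
            _ = N j * |E| + |r j (n+1)| := by rw [abs_mul, abs_of_nonneg hNj]
        have h2 := mul_le_mul_of_nonneg_right
          (mul_le_mul_of_nonneg_right habs hδt.le) hδσ.le
        calc |N j * E + r j (n+1)| * δt * δσ
            ≤ (N j * |E| + |r j (n+1)|) * δt * δσ := h2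
          _ = |E| * δt * (N j * δσ) + δt * (|r j (n+1)| * δσ) := by ring
      have hNν : |E| * δt * (∑ j ∈ Finset.Icc 1 M, N j * δσ) ≤ |E| * δt * νh := by
        apply mul_le_mul_of_nonneg_left hNsum
        positivity
      have hrν : δt * (∑ j ∈ Finset.Icc 1 M, |r j (n+1)| * δσ) ≤ δt * (Cr * h) :=
        mul_le_mul_of_nonneg_left (hr (n+1) (by omega)) hδt.le
      have hEν : |E| * δt * νh ≤ (Bβ * S n + Bβ * (C₂ * h)) * δt * νh := by
        apply mul_le_mul_of_nonneg_right
        exact mul_le_mul_of_nonneg_right hE hδt.le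
        exact hνh.le
      have hstep : S (n+1) ≤ (1 + a * δt) * S n + a * δt * C := by
        have hCeq : a * δt * C = δt * (a * C₂ * h + Cr * h) := by
          rw [hCdef]
          field_simp
        rw [hsplit, hfirst]
        have : (Bβ * S n + Bβ * (C₂ * h)) * δt * νh = a * δt * S n + a * C₂ * h * δt := by
          rw [hadef]; ring
        linarith [hsec, hNν, hrν, hEν, hCeq, this]
      have hmul := mul_le_mul_of_nonneg_left ihn h1a
      calc S (n+1) ≤ (1 + a * δt) * S n + a * δt * C := hstep
        _ ≤ (1 + a * δt) * (C * ((1 + a * δt) ^ n - 1)) + a * δt * C := by linarith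
        _ = C * ((1 + a * δt) ^ (n+1) - 1) := by rw [pow_succ]; ring
  intro k hk1 hkK
  have hSk := key k hkK
  have hexp : (1 + a * δt) ^ k ≤ Real.exp (a * T) := by
    calc (1 + a * δt) ^ k ≤ Real.exp (a * δt) ^ k := by
          apply pow_le_pow_left₀ h1a
          linarith [Real.add_one_le_exp (a * δt)]
      _ = Real.exp ((k : ℝ) * (a * δt)) := by rw [← Real.exp_nat_mul]
      _ ≤ Real.exp (a * T) := by
          apply Real.exp_le_exp.mpr
          have hkT : (k : ℝ) * δt ≤ T := by
            have : (k : ℝ) ≤ (K : ℝ) + 1 := by exact_mod_cast hkK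
            nlinarith
          nlinarith
  calc (∑ i ∈ Finset.Icc 1 k, ∑ j ∈ Finset.Icc 1 M, |e k i j| * δt * δσ)
      = S k := rfl
    _ ≤ C * ((1 + a * δt) ^ k - 1) := hSk
    _ ≤ C * (1 + a * δt) ^ k := by nlinarith
    _ ≤ C * Real.exp (a * T) := mul_le_mul_of_nonneg_left hexp hC
    _ = h * Real.exp (a * T) * (C₂ + Cr / a) := by rw [hCdef]; ring
end

section
/- Let T > 0, b > 1, Ω = (1,b)×(1,b) ⊂ ℝ², and Q̃₁ = {(t,τ,s) : 0 < τ < t < T, 0 < s < 1}. Given ρ⁰ ∈ L∞(Ω), N ∈ L∞(0,1) with N ≥ 0, kernels β̃₁ ∈ L∞((0,T)×(0,T)×(0,1)) and β̃₂ ∈ L∞((0,T)×Ω), and f ∈ L∞((0,T)×(0,1)), there exists a weak solution of the straightened system, i.e. a pair (ρ₁,ρ₂) ∈ L∞(Q̃₁) × L∞((0,T)×Ω) such that: (i) for every C¹ function φ₁ : ℝ³ → ℝ with φ₁(T,τ,s) = 0 for all (τ,s), ∫₀ᵀ ∫₀ᵗ ∫₀¹ ρ₁(t,τ,s) ∂_tφ₁(t,τ,s)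 ds dτ dt + ∫₀ᵀ ∫₀¹ [N(s)·B̃(t) + f(t,s)]·φ₁(t,t,s) ds dt = 0, where B̃(t) = ∫₀ᵗ∫₀¹ β̃₁(t,τ,s) ρ₁(t,τ,s) ds dτ + ∫_Ω β̃₂(t,Y) ρ₂(t,Y) dY; and (ii) for every C¹ function φ₂ : ℝ×ℝ² → ℝ with φ₂(T,·) = 0, ∫₀ᵀ ∫_Ω ρ₂(t,Y) ∂_tφ₂(t,Y) dY dt + ∫_Ω ρ⁰(Y) φ₂(0,Y) dY = 0. -/
open MeasureTheory

namespace S16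

lemma finIoo (a c : ℝ) : IsFiniteMeasure (volume.restrict (Set.Ioo a c)) :=
  ⟨by simp [Real.volume_Ioo]⟩

lemma finProd (a c a' c' : ℝ) :
    IsFiniteMeasure (volume.restrict (Set.Ioo a c ×ˢ Set.Ioo a' c') : Measure (ℝ × ℝ)) := by
  constructor
  rw [Measure.restrict_apply_univ, Measure.volume_eq_prod, Measure.prod_prod]
  exact ENNReal.mul_lt_top (by simp [Real.volume_Ioo]) (by simp [Real.volume_Ioo])

/-- integrable from a bound, finite measure -/
lemma integrable_bdd {α : Type*} [MeasurableSpace α] {μ : Measure α} [IsFiniteMeasure μ]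
    {f : α → ℝ} (hm : AEStronglyMeasurable f μ) {C : ℝ} (h : ∀ᵐ x ∂μ, |f x| ≤ C) :
    Integrable f μ :=
  (integrable_const C).mono' hm (h.mono fun x hx => by simpa using hx)

lemma abs_integral_le {α : Type*} [MeasurableSpace α] {μ : Measure α} [IsFiniteMeasure μ]
    {g : α → ℝ} {C : ℝ} (h : ∀ᵐ x ∂μ, |g x| ≤ C) :
    |∫ x, g x ∂μ| ≤ (μ Set.univ).toReal * C := by
  rw [← Real.norm_eq_abs]
  refine (norm_integral_le_of_norm_le (integrable_const C)
    (h.mono fun x hx => by simpa using hx)).trans ?_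
  rw [integral_const, smul_eq_mul]
  exact le_rfl

/-- measurability of t ↦ ∫_{Ioo 0 t} F t τ dτ -/
lemma meas_tri {F : ℝ → ℝ → ℝ} (hF : Measurable fun p : ℝ × ℝ => F p.1 p.2) :
    Measurable fun t => ∫ τ in Set.Ioo 0 t, F t τ := by
  have hG : Measurable fun p : ℝ × ℝ => (Set.Ioo (0:ℝ) p.1).indicator (F p.1) p.2 := by
    have : (fun p : ℝ × ℝ => (Set.Ioo (0:ℝ) p.1).indicator (F p.1) p.2)
        = Set.indicator {p : ℝ × ℝ | 0 < p.2 ∧ p.2 < p.1} (fun p => F p.1 p.2) := by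
      funext p
      by_cases h : 0 < p.2 ∧ p.2 < p.1 <;>
        simp [Set.indicator, Set.mem_Ioo, h]
    rw [this]
    exact hF.indicator (measurableSet_lt measurable_const measurable_snd |>.inter
      (measurableSet_lt measurable_snd measurable_fst))
  have key : ∀ t, (∫ τ in Set.Ioo 0 t, F t τ)
      = ∫ τ, (Set.Ioo (0:ℝ) t).indicator (F t) τ := fun t =>
    (integral_indicator measurableSet_Ioo).symm
  simp only [key]
  exact (hG.stronglyMeasurable.integral_prod_right').measurable

section Deriv
variable {α : Type*} [NormedAddCommGroup α] [NormedSpace ℝ α]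

lemma deriv_line {Φ : ℝ × α → ℝ} (hΦ : ContDiff ℝ 1 Φ) (y : α) (t : ℝ) :
    HasDerivAt (fun u => Φ (u, y)) (fderiv ℝ Φ (t, y) (1, 0)) t := by
  have h1 : HasDerivAt (fun u : ℝ => (u, y)) ((1 : ℝ), (0 : α)) t :=
    (hasDerivAt_id t).prodMk (hasDerivAt_const t y)
  have := ((hΦ.differentiable one_ne_zero (t, y)).hasFDerivAt).comp_hasDerivAt t h1
  exact this

lemma cont_D {Φ : ℝ × α → ℝ} (hΦ : ContDiff ℝ 1 Φ) :
    Continuous fun p : ℝ × α => fderiv ℝ Φ p (1, 0) :=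
  (hΦ.continuous_fderiv one_ne_zero).clm_apply continuous_const

lemma ftc {Φ : ℝ × α → ℝ} (hΦ : ContDiff ℝ 1 Φ) (y : α) {a c : ℝ} (hac : a ≤ c) :
    ∫ t in Set.Ioo a c, fderiv ℝ Φ (t, y) (1, 0) = Φ (c, y) - Φ (a, y) := by
  rw [← integral_Ioc_eq_integral_Ioo, ← intervalIntegral.integral_of_le hac]
  have heq : (fun t => fderiv ℝ Φ (t, y) (1, 0)) = deriv (fun u => Φ (u, y)) :=
    funext fun t => ((deriv_line hΦ y t).deriv).symm
  rw [heq]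
  exact intervalIntegral.integral_deriv_eq_sub
    (fun x _ => (deriv_line hΦ y x).differentiableAt)
    (by rw [← heq]; exact ((cont_D hΦ).comp (continuous_id.prodMk continuous_const)).intervalIntegrable a c)
end Deriv

/-- Fubini for a triangle. -/
lemma tri_swap {T : ℝ} (hT : 0 < T) {Φ : ℝ → ℝ → ℝ}
    (hm : Measurable fun p : ℝ × ℝ => Φ p.1 p.2) {C : ℝ}
    (hbd : ∀ t ∈ Set.Ioo 0 T, ∀ τ ∈ Set.Ioo 0 T, |Φ t τ| ≤ C) :
    (∫ t in Set.Ioo 0 T, ∫ τ in Set.Ioo 0 t, Φ t τ)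
      = ∫ τ in Set.Ioo 0 T, ∫ t in Set.Ioo τ T, Φ t τ := by
  haveI := finIoo 0 T
  set Ψ : ℝ × ℝ → ℝ := fun p => if p.2 < p.1 then Φ p.1 p.2 else 0 with hΨ
  have hΨm : Measurable Ψ :=
    Measurable.ite (measurableSet_lt measurable_snd measurable_fst) hm measurable_const
  have hleft : ∀ t ∈ Set.Ioo (0:ℝ) T, (∫ τ in Set.Ioo 0 t, Φ t τ) = ∫ τ in Set.Ioo 0 T, Ψ (t, τ) := by
    intro t ht
    have h1 : (fun τ => Ψ (t, τ)) = (Set.Iio t).indicator (fun τ => Φ t τ) := by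
      funext τ; by_cases h : τ < t <;> simp [hΨ, Set.indicator, h]
    rw [h1, integral_indicator measurableSet_Iio, Measure.restrict_restrict measurableSet_Iio]
    congr 1
    rw [show Set.Iio t ∩ Set.Ioo 0 T = Set.Ioo 0 t by
      ext x; simp only [Set.mem_inter_iff, Set.mem_Iio, Set.mem_Ioo]
      exact ⟨fun ⟨h1, h2, _⟩ => ⟨h2, h1⟩, fun ⟨h1, h2⟩ => ⟨h2, h1, h2.trans ht.2⟩⟩]
  have hright : ∀ τ ∈ Set.Ioo (0:ℝ) T, (∫ t in Set.Ioo 0 T, Ψ (t, τ)) = ∫ t in Set.Ioo τ T, Φ t τ := by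
    intro τ hτ
    have h1 : (fun t => Ψ (t, τ)) = (Set.Ioi τ).indicator (fun t => Φ t τ) := by
      funext t; by_cases h : τ < t <;> simp [hΨ, Set.indicator, h]
    rw [h1, integral_indicator measurableSet_Ioi, Measure.restrict_restrict measurableSet_Ioi]
    congr 1
    rw [show Set.Ioi τ ∩ Set.Ioo 0 T = Set.Ioo τ T by
      ext x; simp only [Set.mem_inter_iff, Set.mem_Ioi, Set.mem_Ioo]
      exact ⟨fun ⟨h1, ⟨_, h3⟩⟩ => ⟨h1, h3⟩, fun ⟨h1, h2⟩ => ⟨h1, hτ.1.trans h1, h2⟩⟩]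
  rw [setIntegral_congr_fun measurableSet_Ioo (fun t ht => hleft t ht),
    ← setIntegral_congr_fun measurableSet_Ioo (fun τ hτ => hright τ hτ)]
  apply integral_integral_swap
  apply integrable_bdd (C := max C 0) hΨm.aestronglyMeasurable
  have hmem : ∀ᵐ p ∂((volume.restrict (Set.Ioo (0:ℝ) T)).prod (volume.restrict (Set.Ioo (0:ℝ) T))),
      p ∈ Set.Ioo (0:ℝ) T ×ˢ Set.Ioo (0:ℝ) T := by
    rw [Measure.prod_restrict]
    exact ae_restrict_mem (measurableSet_Ioo.prod measurableSet_Ioo)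
  refine hmem.mono fun p hp => ?_
  rcases hp with ⟨hp1, hp2⟩
  by_cases h : p.2 < p.1
  · simp only [hΨ, Function.uncurry, h, if_true]
    exact le_max_of_le_left (hbd _ hp1 _ hp2)
  · simp only [hΨ, Function.uncurry, h, if_false, abs_zero]
    exact le_max_right _ _


noncomputable def picard (T : ℝ) (h : ℝ → ℝ) (K : ℝ → ℝ → ℝ) : ℕ → ℝ → ℝ
  | 0 => fun _ => 0
  | n + 1 => fun t =>
      if t ∈ Set.Icc 0 T then h t + ∫ τ in Set.Ioo 0 t, K t τ * picard T h K n τ else 0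

section Picard
variable {T M Ch : ℝ} {h : ℝ → ℝ} {K : ℝ → ℝ → ℝ}

lemma picard_meas (hhm : Measurable h) (hKm : Measurable fun p : ℝ × ℝ => K p.1 p.2) :
    ∀ n, Measurable (picard T h K n) := by
  intro n
  induction n with
  | zero => exact measurable_const
  | succ n ih =>
    show Measurable fun t => if t ∈ Set.Icc 0 T then _ else _
    exact Measurable.ite measurableSet_Icc
      (hhm.add (meas_tri (hKm.mul (ih.comp measurable_snd)))) measurable_const

lemma picard_outside : ∀ n t, t ∉ Set.Icc 0 T → picard T h K n t = 0 := by
  intro n t ht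
  cases n with
  | zero => rfl
  | succ n => simp [picard, ht]

lemma picard_bd (hhm : Measurable h) (hKm : Measurable fun p : ℝ × ℝ => K p.1 p.2)
    (hM : 0 ≤ M) (hCh : 0 ≤ Ch) (hKb : ∀ t τ, |K t τ| ≤ M)
    (hhb : ∀ t ∈ Set.Icc 0 T, |h t| ≤ Ch) :
    ∀ n, ∃ C, 0 ≤ C ∧ ∀ t, |picard T h K n t| ≤ C := by
  intro n
  induction n with
  | zero => exact ⟨0, le_refl 0, fun t => by simp [picard]⟩
  | succ n ih =>
    obtain ⟨C, hC0, hC⟩ := ih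
    refine ⟨Ch + M * C * max T 0, by positivity, fun t => ?_⟩
    by_cases ht : t ∈ Set.Icc 0 T
    · have hint : (∫ τ in Set.Ioo 0 t, ‖K t τ * picard T h K n τ‖)
          ≤ ∫ τ in Set.Ioo 0 t, M * C := by
        haveI := finIoo 0 t
        apply integral_mono_of_nonneg (Filter.Eventually.of_forall fun τ => norm_nonneg _)
          (integrable_const _)
        refine Filter.Eventually.of_forall fun τ => ?_
        calc ‖K t τ * picard T h K n τ‖ = |K t τ| * |picard T h K n τ| := abs_mul _ _
          _ ≤ M * C := mul_le_mul (hKb t τ) (hC τ) (abs_nonneg _) hM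
      have hIi : Integrable (fun τ => K t τ * picard T h K n τ)
          (volume.restrict (Set.Ioo 0 t)) := by
        haveI := finIoo 0 t
        apply integrable_bdd (C := M * C)
          (((hKm.comp (measurable_const.prodMk measurable_id)).mul
            (picard_meas hhm hKm n)).aestronglyMeasurable)
        refine Filter.Eventually.of_forall fun τ => ?_
        calc |K t τ * picard T h K n τ| = |K t τ| * |picard T h K n τ| := abs_mul _ _
          _ ≤ M * C := mul_le_mul (hKb t τ) (hC τ) (abs_nonneg _) hM
      have e1 : picard T h K (n + 1) t
          = h t + ∫ τ in Set.Ioo 0 t, K t τ * picard T h K n τ := by simp [picard, ht]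
      rw [e1]
      have h2 : |∫ τ in Set.Ioo 0 t, K t τ * picard T h K n τ| ≤ M * C * max T 0 := by
        calc |∫ τ in Set.Ioo 0 t, K t τ * picard T h K n τ|
            ≤ ∫ τ in Set.Ioo 0 t, ‖K t τ * picard T h K n τ‖ := by
              rw [← Real.norm_eq_abs]; exact norm_integral_le_integral_norm _
          _ ≤ ∫ τ in Set.Ioo 0 t, M * C := hint
          _ = (volume (Set.Ioo 0 t)).toReal * (M * C) := by
              rw [setIntegral_const, smul_eq_mul]
              rfl
          _ ≤ max T 0 * (M * C) := by
              have hv : (volume (Set.Ioo 0 t)).toReal = t := by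
                rw [Real.volume_Ioo, sub_zero, ENNReal.toReal_ofReal ht.1]
              rw [hv]
              exact mul_le_mul_of_nonneg_right (le_max_of_le_left ht.2) (by positivity)
          _ = M * C * max T 0 := by ring
      calc |h t + _| ≤ |h t| + |∫ τ in Set.Ioo 0 t, K t τ * picard T h K n τ| := abs_add_le _ _
        _ ≤ Ch + M * C * max T 0 := add_le_add (hhb t ht) h2
    · rw [picard_outside (n+1) t ht]
      simp; positivity

lemma picard_diff (hhm : Measurable h) (hKm : Measurable fun p : ℝ × ℝ => K p.1 p.2)
    (hM : 0 ≤ M) (hCh : 0 ≤ Ch) (hKb : ∀ t τ, |K t τ| ≤ M)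
    (hhb : ∀ t ∈ Set.Icc 0 T, |h t| ≤ Ch) :
    ∀ n, ∀ t ∈ Set.Icc 0 T,
      |picard T h K (n + 1) t - picard T h K n t| ≤ Ch * M ^ n * t ^ n / n.factorial := by
  intro n
  induction n with
  | zero =>
    intro t ht
    simp only [picard, ht, if_true]
    have h0 : (∫ τ in Set.Ioo 0 t, K t τ * picard T h K 0 τ) = 0 := by simp [picard]
    simp only [h0, add_zero, sub_zero]
    simpa using hhb t ht
  | succ n ih =>
    intro t ht
    have ht0 : (0:ℝ) ≤ t := ht.1
    have hsubIcc : Set.Ioo 0 t ⊆ Set.Icc 0 T := fun τ hτ => ⟨hτ.1.le, hτ.2.le.trans ht.2⟩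
    haveI := finIoo 0 t
    have hintm : ∀ m, Integrable (fun τ => K t τ * picard T h K m τ)
        (volume.restrict (Set.Ioo 0 t)) := by
      intro m
      obtain ⟨C, hC0, hC⟩ := picard_bd hhm hKm hM hCh hKb hhb m
      apply integrable_bdd (C := M * C)
        (((hKm.comp (measurable_const.prodMk measurable_id)).mul
          (picard_meas hhm hKm m)).aestronglyMeasurable)
      refine Filter.Eventually.of_forall fun τ => ?_
      calc |K t τ * picard T h K m τ| = |K t τ| * |picard T h K m τ| := abs_mul _ _
        _ ≤ M * C := mul_le_mul (hKb t τ) (hC τ) (abs_nonneg _) hM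
    have hdiff : picard T h K (n + 2) t - picard T h K (n + 1) t
        = ∫ τ in Set.Ioo 0 t, K t τ * (picard T h K (n + 1) τ - picard T h K n τ) := by
      have e1 : picard T h K (n + 2) t
          = h t + ∫ τ in Set.Ioo 0 t, K t τ * picard T h K (n + 1) τ := by
        simp [picard, ht]
      have e2 : picard T h K (n + 1) t
          = h t + ∫ τ in Set.Ioo 0 t, K t τ * picard T h K n τ := by
        simp [picard, ht]
      have e3 : picard T h K (n + 2) t - picard T h K (n + 1) t
          = (∫ τ in Set.Ioo 0 t, K t τ * picard T h K (n+1) τ)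
            - ∫ τ in Set.Ioo 0 t, K t τ * picard T h K n τ := by rw [e1, e2]; ring
      rw [e3, ← integral_sub (hintm (n+1)) (hintm n)]
      congr 1
      funext τ
      ring
    rw [hdiff]
    set c : ℝ := M * (Ch * M ^ n / n.factorial) with hc
    have hc0 : 0 ≤ c := by positivity
    have hgint : Integrable (fun τ => c * τ ^ n) (volume.restrict (Set.Ioo 0 t)) := by
      have this : IntervalIntegrable (fun τ : ℝ => c * τ ^ n) volume 0 t :=
        Continuous.intervalIntegrable (continuous_const.mul (continuous_pow n)) 0 t
      rw [intervalIntegrable_iff_integrableOn_Ioc_of_le ht0] at this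
      exact this.mono_set Set.Ioo_subset_Ioc_self
    have hbound : ‖∫ τ in Set.Ioo 0 t, K t τ * (picard T h K (n + 1) τ - picard T h K n τ)‖
        ≤ ∫ τ in Set.Ioo 0 t, c * τ ^ n := by
      apply norm_integral_le_of_norm_le hgint
      rw [ae_restrict_iff' measurableSet_Ioo]
      refine Filter.Eventually.of_forall fun τ hτ => ?_
      have h1 : |picard T h K (n + 1) τ - picard T h K n τ|
          ≤ Ch * M ^ n * τ ^ n / n.factorial := ih τ (hsubIcc hτ)
      calc ‖K t τ * (picard T h K (n + 1) τ - picard T h K n τ)‖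
          = |K t τ| * |picard T h K (n + 1) τ - picard T h K n τ| := abs_mul _ _
        _ ≤ M * (Ch * M ^ n * τ ^ n / n.factorial) :=
            mul_le_mul (hKb t τ) h1 (abs_nonneg _) hM
        _ = c * τ ^ n := by rw [hc]; ring
    have hval : (∫ τ in Set.Ioo 0 t, c * τ ^ n) = c * (t ^ (n + 1) / (n + 1)) := by
      rw [integral_const_mul]
      congr 1
      rw [← integral_Ioc_eq_integral_Ioo, ← intervalIntegral.integral_of_le ht0]
      simpa using integral_pow n
    rw [hval] at hbound
    refine hbound.trans_eq ?_
    rw [hc, Nat.factorial_succ]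
    have hnf : (0:ℝ) < n.factorial := by positivity
    push_cast
    field_simp
    ring

lemma volterra (hT : 0 < T) (hhm : Measurable h) (hKm : Measurable fun p : ℝ × ℝ => K p.1 p.2)
    (hM : 0 ≤ M) (hCh : 0 ≤ Ch) (hKb : ∀ t τ, |K t τ| ≤ M)
    (hhb : ∀ t ∈ Set.Icc 0 T, |h t| ≤ Ch) :
    ∃ B : ℝ → ℝ, Measurable B ∧ (∃ CB, 0 ≤ CB ∧ ∀ t, |B t| ≤ CB) ∧
      ∀ t ∈ Set.Icc 0 T, B t = h t + ∫ τ in Set.Ioo 0 t, K t τ * B τ := by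
  set d : ℕ → ℝ := fun n => Ch * ((M * T) ^ n / n.factorial) with hd
  have hd0 : ∀ n, 0 ≤ d n := fun n => by
    have : (0:ℝ) ≤ M * T := mul_nonneg hM hT.le
    positivity
  have hdsum : Summable d := (Real.summable_pow_div_factorial (M * T)).mul_left Ch
  have hdist : ∀ t n, dist (picard T h K n t) (picard T h K (n + 1) t) ≤ d n := by
    intro t n
    by_cases ht : t ∈ Set.Icc 0 T
    · rw [dist_comm, Real.dist_eq]
      refine (picard_diff hhm hKm hM hCh hKb hhb n t ht).trans ?_
      rw [hd]
      have h1 : M ^ n * t ^ n ≤ (M * T) ^ n := by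
        rw [← mul_pow]
        exact pow_le_pow_left₀ (mul_nonneg hM ht.1) (mul_le_mul_of_nonneg_left ht.2 hM) n
      show Ch * M ^ n * t ^ n / ↑n.factorial ≤ Ch * ((M * T) ^ n / ↑n.factorial)
      rw [← mul_div_assoc, mul_assoc]
      gcongr
    · rw [picard_outside n t ht, picard_outside (n+1) t ht]
      simpa using hd0 n
  have hcauchy : ∀ t, CauchySeq fun n => picard T h K n t := fun t =>
    cauchySeq_of_summable_dist (Summable.of_nonneg_of_le (fun n => dist_nonneg)
      (hdist t) hdsum)
  have hlim : ∀ t, ∃ L, Filter.Tendsto (fun n => picard T h K n t) Filter.atTop (nhds L) :=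
    fun t => cauchySeq_tendsto_of_complete (hcauchy t)
  have hpb : ∀ n t, |picard T h K n t| ≤ ∑' n, d n := by
    intro n t
    have htel : picard T h K n t
        = ∑ k ∈ Finset.range n, (picard T h K (k+1) t - picard T h K k t) := by
      rw [Finset.sum_range_sub (fun k => picard T h K k t) n]
      simp [picard]
    rw [htel]
    calc |∑ k ∈ Finset.range n, (picard T h K (k+1) t - picard T h K k t)|
        ≤ ∑ k ∈ Finset.range n, |picard T h K (k+1) t - picard T h K k t| :=
          Finset.abs_sum_le_sum_abs _ _
      _ ≤ ∑ k ∈ Finset.range n, d k := Finset.sum_le_sum fun k _ => by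
          rw [← Real.dist_eq, dist_comm]; exact hdist t k
      _ ≤ ∑' n, d n := Summable.sum_le_tsum _ (fun i _ => hd0 i) hdsum
  refine ⟨fun t => (hlim t).choose, ?_, ⟨∑' n, d n, ?_, ?_⟩, ?_⟩
  · exact measurable_of_tendsto_metrizable' Filter.atTop (picard_meas hhm hKm)
      (tendsto_pi_nhds.2 fun t => (hlim t).choose_spec)
  · exact tsum_nonneg hd0
  · intro t
    exact le_of_tendsto ((hlim t).choose_spec.abs)
      (Filter.Eventually.of_forall fun n => hpb n t)
  · intro t ht
    haveI := finIoo 0 t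
    set B : ℝ → ℝ := fun t => (hlim t).choose with hB
    have htend : ∀ τ, Filter.Tendsto (fun n => picard T h K n τ) Filter.atTop (nhds (B τ)) :=
      fun τ => (hlim τ).choose_spec
    have hCB : ∀ n τ, |picard T h K n τ| ≤ ∑' n, d n := fun n τ => hpb n τ
    have h2 : Filter.Tendsto (fun n => h t + ∫ τ in Set.Ioo 0 t, K t τ * picard T h K n τ)
        Filter.atTop (nhds (h t + ∫ τ in Set.Ioo 0 t, K t τ * B τ)) := by
      apply Filter.Tendsto.const_add
      apply tendsto_integral_of_dominated_convergence (fun _ => M * ∑' n, d n)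
      · exact fun n => ((hKm.comp (measurable_const.prodMk measurable_id)).mul
          (picard_meas hhm hKm n)).aestronglyMeasurable
      · exact integrable_const _
      · intro n
        refine Filter.Eventually.of_forall fun τ => ?_
        calc ‖K t τ * picard T h K n τ‖ = |K t τ| * |picard T h K n τ| := abs_mul _ _
          _ ≤ M * ∑' n, d n := mul_le_mul (hKb t τ) (hCB n τ) (abs_nonneg _) hM
      · exact Filter.Eventually.of_forall fun τ => (htend τ).const_mul (K t τ)
    have h1 : Filter.Tendsto (fun n => h t + ∫ τ in Set.Ioo 0 t, K t τ * picard T h K n τ)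
        Filter.atTop (nhds (B t)) := by
      have := (htend t).comp (Filter.tendsto_add_atTop_nat 1)
      refine this.congr fun n => ?_
      simp only [Function.comp]
      simp [picard, ht]
    exact tendsto_nhds_unique h1 h2

end Picard
end S16

open S16

/-- **Existence of a weak solution for the straightened metastatic system.** Given L∞ data
`ρ⁰` on `Ω = (1,b)²`, `N ≥ 0` on `(0,1)`, bounded measurable kernels `β̃₁, β̃₂` and `f`, there
exists a pair `(ρ₁, ρ₂)` of bounded measurable functions satisfying the weak formulations of
`∂_t ρ̃₁ = 0` with renewal boundary condition `ρ̃₁(t,t,s) = N(s) B̃(t) + f(t,s)` and of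
`∂_t ρ̃₂ = 0` with `ρ̃₂(0,·) = ρ⁰`. -/
theorem stmt16 (T b : ℝ) (hT : 0 < T) (hb : 1 < b)
    (ρ0 : ℝ × ℝ → ℝ) (N : ℝ → ℝ) (β₁ : ℝ → ℝ → ℝ → ℝ) (β₂ : ℝ → ℝ × ℝ → ℝ) (f : ℝ → ℝ → ℝ)
    (hρ0m : Measurable ρ0) (hρ0bd : ∃ C, ∀ Y, |ρ0 Y| ≤ C)
    (hNm : Measurable N) (hNbd : ∃ C, ∀ s, |N s| ≤ C)
    (hNpos : ∀ s ∈ Set.Ioo (0:ℝ) 1, 0 ≤ N s)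
    (hβ₁m : Measurable fun p : ℝ × ℝ × ℝ => β₁ p.1 p.2.1 p.2.2)
    (hβ₁bd : ∃ C, ∀ t τ s, |β₁ t τ s| ≤ C)
    (hβ₂m : Measurable fun p : ℝ × (ℝ × ℝ) => β₂ p.1 p.2)
    (hβ₂bd : ∃ C, ∀ t Y, |β₂ t Y| ≤ C)
    (hfm : Measurable fun p : ℝ × ℝ => f p.1 p.2)
    (hfbd : ∃ C, ∀ t s, |f t s| ≤ C) :
    ∃ (ρ₁ : ℝ → ℝ → ℝ → ℝ) (ρ₂ : ℝ → ℝ × ℝ → ℝ),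
      Measurable (fun p : ℝ × ℝ × ℝ => ρ₁ p.1 p.2.1 p.2.2) ∧
      (∃ C, ∀ t τ s, |ρ₁ t τ s| ≤ C) ∧
      Measurable (fun p : ℝ × (ℝ × ℝ) => ρ₂ p.1 p.2) ∧
      (∃ C, ∀ t Y, |ρ₂ t Y| ≤ C) ∧
      (∀ φ₁ : ℝ → ℝ → ℝ → ℝ,
        ContDiff ℝ 1 (fun p : ℝ × ℝ × ℝ => φ₁ p.1 p.2.1 p.2.2) →
        (∀ τ s, φ₁ T τ s = 0) →
        (∫ t in Set.Ioo 0 T, ∫ τ in Set.Ioo 0 t, ∫ s in Set.Ioo (0:ℝ) 1,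
            ρ₁ t τ s * deriv (fun u => φ₁ u τ s) t) +
          (∫ t in Set.Ioo 0 T, ∫ s in Set.Ioo (0:ℝ) 1,
            (N s * ((∫ τ in Set.Ioo 0 t, ∫ s' in Set.Ioo (0:ℝ) 1, β₁ t τ s' * ρ₁ t τ s') +
                ∫ Y in Set.Ioo (1:ℝ) b ×ˢ Set.Ioo (1:ℝ) b, β₂ t Y * ρ₂ t Y) +
              f t s) * φ₁ t t s) = 0) ∧
      (∀ φ₂ : ℝ → ℝ × ℝ → ℝ,
        ContDiff ℝ 1 (fun p : ℝ × (ℝ × ℝ) => φ₂ p.1 p.2) →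
        (∀ Y, φ₂ T Y = 0) →
        (∫ t in Set.Ioo 0 T, ∫ Y in Set.Ioo (1:ℝ) b ×ˢ Set.Ioo (1:ℝ) b,
            ρ₂ t Y * deriv (fun u => φ₂ u Y) t) +
          (∫ Y in Set.Ioo (1:ℝ) b ×ˢ Set.Ioo (1:ℝ) b, ρ0 Y * φ₂ 0 Y) = 0) := by
  obtain ⟨C0, hC0⟩ := hρ0bd
  obtain ⟨CN, hCN⟩ := hNbd
  obtain ⟨C1, hC1⟩ := hβ₁bd
  obtain ⟨C2, hC2⟩ := hβ₂bd
  obtain ⟨Cf, hCf⟩ := hfbd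
  have hC0n : 0 ≤ C0 := (abs_nonneg _).trans (hC0 (1,1))
  have hCNn : 0 ≤ CN := (abs_nonneg _).trans (hCN 0)
  have hC1n : 0 ≤ C1 := (abs_nonneg _).trans (hC1 0 0 0)
  have hC2n : 0 ≤ C2 := (abs_nonneg _).trans (hC2 0 (1,1))
  have hCfn : 0 ≤ Cf := (abs_nonneg _).trans (hCf 0 0)
  have hb1 : (0:ℝ) ≤ b - 1 := by linarith
  haveI i1 : IsFiniteMeasure (volume.restrict (Set.Ioo (0:ℝ) T)) := finIoo 0 T
  haveI i2 : IsFiniteMeasure (volume.restrict (Set.Ioo (0:ℝ) 1)) := finIoo 0 1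
  haveI i3 : IsFiniteMeasure
      (volume.restrict (Set.Ioo (1:ℝ) b ×ˢ Set.Ioo (1:ℝ) b) : Measure (ℝ × ℝ)) :=
    finProd 1 b 1 b
  have hvol1 : (volume (Set.Ioo (0:ℝ) 1)).toReal = 1 := by
    simp [Real.volume_Ioo]
  have hvolOm : ((volume : Measure (ℝ × ℝ)) (Set.Ioo (1:ℝ) b ×ˢ Set.Ioo (1:ℝ) b)).toReal
      = (b - 1) * (b - 1) := by
    rw [Measure.volume_eq_prod, Measure.prod_prod, Real.volume_Ioo, ENNReal.toReal_mul,
      ENNReal.toReal_ofReal hb1]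
  -- kernels
  set K : ℝ → ℝ → ℝ := fun t τ => ∫ s in Set.Ioo (0:ℝ) 1, β₁ t τ s * N s with hKdef
  set Fm : ℝ → ℝ → ℝ := fun t τ => ∫ s in Set.Ioo (0:ℝ) 1, β₁ t τ s * f τ s with hFmdef
  set h2 : ℝ → ℝ :=
    fun t => ∫ Y in Set.Ioo (1:ℝ) b ×ˢ Set.Ioo (1:ℝ) b, β₂ t Y * ρ0 Y with hh2def
  set F : ℝ → ℝ := fun t => ∫ τ in Set.Ioo 0 t, Fm t τ with hFdef
  set hh : ℝ → ℝ := fun t => h2 t + F t with hhdef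
  -- measurability of kernels
  have hmap1 : Measurable fun q : (ℝ × ℝ) × ℝ => (q.1.1, q.1.2, q.2) :=
    (measurable_fst.fst).prodMk ((measurable_fst.snd).prodMk measurable_snd)
  have hKm : Measurable fun p : ℝ × ℝ => K p.1 p.2 := by
    apply StronglyMeasurable.measurable
    exact StronglyMeasurable.integral_prod_right'
      (f := fun q : (ℝ × ℝ) × ℝ => β₁ q.1.1 q.1.2 q.2 * N q.2)
      (((hβ₁m.comp hmap1).mul (hNm.comp measurable_snd)).stronglyMeasurable)
  have hFmm : Measurable fun p : ℝ × ℝ => Fm p.1 p.2 := by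
    apply StronglyMeasurable.measurable
    exact StronglyMeasurable.integral_prod_right'
      (f := fun q : (ℝ × ℝ) × ℝ => β₁ q.1.1 q.1.2 q.2 * f q.1.2 q.2)
      (((hβ₁m.comp hmap1).mul
        (hfm.comp ((measurable_fst.snd).prodMk measurable_snd))).stronglyMeasurable)
  have hh2m : Measurable h2 := by
    apply StronglyMeasurable.measurable
    exact StronglyMeasurable.integral_prod_right'
      (f := fun q : ℝ × (ℝ × ℝ) => β₂ q.1 q.2 * ρ0 q.2)
      ((hβ₂m.mul (hρ0m.comp measurable_snd)).stronglyMeasurable)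
  have hFmeas : Measurable F := meas_tri hFmm
  have hhm : Measurable hh := hh2m.add hFmeas
  -- bounds
  have hKb : ∀ t τ, |K t τ| ≤ C1 * CN := by
    intro t τ
    have h1 : |K t τ| ≤ (volume.restrict (Set.Ioo (0:ℝ) 1) Set.univ).toReal * (C1 * CN) := by
      apply abs_integral_le
      refine Filter.Eventually.of_forall fun s => ?_
      calc |β₁ t τ s * N s| = |β₁ t τ s| * |N s| := abs_mul _ _
        _ ≤ C1 * CN := mul_le_mul (hC1 t τ s) (hCN s) (abs_nonneg _) hC1n
    rwa [Measure.restrict_apply_univ, hvol1, one_mul] at h1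
  have hFmb : ∀ t τ, |Fm t τ| ≤ C1 * Cf := by
    intro t τ
    have h1 : |Fm t τ| ≤ (volume.restrict (Set.Ioo (0:ℝ) 1) Set.univ).toReal * (C1 * Cf) := by
      apply abs_integral_le
      refine Filter.Eventually.of_forall fun s => ?_
      calc |β₁ t τ s * f τ s| = |β₁ t τ s| * |f τ s| := abs_mul _ _
        _ ≤ C1 * Cf := mul_le_mul (hC1 t τ s) (hCf τ s) (abs_nonneg _) hC1n
    rwa [Measure.restrict_apply_univ, hvol1, one_mul] at h1
  have hh2b : ∀ t, |h2 t| ≤ C2 * C0 * ((b - 1) * (b - 1)) := by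
    intro t
    have h1 : |h2 t| ≤ ((volume : Measure (ℝ × ℝ)).restrict
        (Set.Ioo (1:ℝ) b ×ˢ Set.Ioo (1:ℝ) b) Set.univ).toReal * (C2 * C0) := by
      apply abs_integral_le
      refine Filter.Eventually.of_forall fun Y => ?_
      calc |β₂ t Y * ρ0 Y| = |β₂ t Y| * |ρ0 Y| := abs_mul _ _
        _ ≤ C2 * C0 := mul_le_mul (hC2 t Y) (hC0 Y) (abs_nonneg _) hC2n
    rw [Measure.restrict_apply_univ, hvolOm] at h1
    calc |h2 t| ≤ (b-1)*(b-1) * (C2 * C0) := h1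
      _ = C2 * C0 * ((b-1)*(b-1)) := by ring
  have hFb : ∀ t ∈ Set.Icc (0:ℝ) T, |F t| ≤ C1 * Cf * T := by
    intro t ht
    haveI := finIoo 0 t
    have h1 : |F t| ≤ (volume.restrict (Set.Ioo (0:ℝ) t) Set.univ).toReal * (C1 * Cf) := by
      apply abs_integral_le
      exact Filter.Eventually.of_forall fun τ => hFmb t τ
    rw [Measure.restrict_apply_univ, Real.volume_Ioo, sub_zero,
      ENNReal.toReal_ofReal ht.1] at h1
    calc |F t| ≤ t * (C1 * Cf) := h1
      _ ≤ T * (C1 * Cf) := mul_le_mul_of_nonneg_right ht.2 (by positivity)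
      _ = C1 * Cf * T := by ring
  set Ch : ℝ := C2 * C0 * ((b - 1) * (b - 1)) + C1 * Cf * T with hChdef
  have hCh : 0 ≤ Ch := by positivity
  have hhb : ∀ t ∈ Set.Icc (0:ℝ) T, |hh t| ≤ Ch := fun t ht =>
    (abs_add_le _ _).trans (add_le_add (hh2b t) (hFb t ht))
  set M : ℝ := C1 * CN with hMdef
  have hM : 0 ≤ M := by positivity
  obtain ⟨B, hBm, ⟨CB, hCB0, hCBb⟩, hBeq⟩ := volterra hT hhm hKm hM hCh hKb hhb
  refine ⟨fun _ τ s => N s * B τ + f τ s, fun _ Y => ρ0 Y, ?_, ?_, ?_, ?_, ?_, ?_⟩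
  · exact ((hNm.comp measurable_snd.snd).mul (hBm.comp measurable_snd.fst)).add
      (hfm.comp (measurable_snd.fst.prodMk measurable_snd.snd))
  · refine ⟨CN * CB + Cf, fun t τ s => ?_⟩
    calc |N s * B τ + f τ s| ≤ |N s * B τ| + |f τ s| := abs_add_le _ _
      _ ≤ CN * CB + Cf := by
          rw [abs_mul]
          exact add_le_add (mul_le_mul (hCN s) (hCBb τ) (abs_nonneg _) hCNn) (hCf τ s)
  · exact hρ0m.comp measurable_snd
  · exact ⟨C0, fun _ Y => hC0 Y⟩
  · -- weak formulation for ρ₁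
    intro φ₁ hφ hφT
    beta_reduce
    have hder : ∀ (t τ s : ℝ), deriv (fun u => φ₁ u τ s) t
        = fderiv ℝ (fun p : ℝ × ℝ × ℝ => φ₁ p.1 p.2.1 p.2.2) (t, (τ, s)) (1, 0) :=
      fun t τ s => HasDerivAt.deriv (deriv_line hφ (τ, s) t)
    simp only [hder]
    obtain ⟨CD, hCD⟩ := ((isCompact_Icc (a := (0:ℝ)) (b := T)).prod
      ((isCompact_Icc (a := (0:ℝ)) (b := T)).prod
        (isCompact_Icc (a := (0:ℝ)) (b := 1)))).exists_bound_of_continuousOn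
      (cont_D hφ).continuousOn
    set Cg : ℝ := CN * CB + Cf with hCgdef
    have hCg0 : 0 ≤ Cg := by positivity
    have hgb : ∀ τ s : ℝ, |N s * B τ + f τ s| ≤ Cg := by
      intro τ s
      calc |N s * B τ + f τ s| ≤ |N s * B τ| + |f τ s| := abs_add_le _ _
        _ ≤ Cg := by
            rw [abs_mul, hCgdef]
            exact add_le_add (mul_le_mul (hCN s) (hCBb τ) (abs_nonneg _) hCNn) (hCf τ s)
    -- identify the nonlocal term with B
    have hBig : ∀ t ∈ Set.Ioo (0:ℝ) T,
        ((∫ τ in Set.Ioo 0 t, ∫ s' in Set.Ioo (0:ℝ) 1, β₁ t τ s' * (N s' * B τ + f τ s')) +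
          ∫ Y in Set.Ioo (1:ℝ) b ×ˢ Set.Ioo (1:ℝ) b, β₂ t Y * ρ0 Y) = B t := by
      intro t ht
      haveI := finIoo 0 t
      have hmap2 : ∀ t τ : ℝ, Measurable fun s' : ℝ => (t, τ, s') := fun t τ =>
        measurable_const.prodMk (measurable_const.prodMk measurable_id)
      have hinner : ∀ τ, (∫ s' in Set.Ioo (0:ℝ) 1, β₁ t τ s' * (N s' * B τ + f τ s'))
          = K t τ * B τ + Fm t τ := by
        intro τ
        have hi1 : Integrable (fun s' => β₁ t τ s' * N s' * B τ)
            (volume.restrict (Set.Ioo (0:ℝ) 1)) := by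
          apply integrable_bdd (C := C1 * CN * CB)
            (((hβ₁m.comp (hmap2 t τ)).mul hNm).mul_const (B τ)).aestronglyMeasurable
          refine Filter.Eventually.of_forall fun s' => ?_
          calc |β₁ t τ s' * N s' * B τ| = |β₁ t τ s'| * |N s'| * |B τ| := by
                rw [abs_mul, abs_mul]
            _ ≤ C1 * CN * CB := by
                apply mul_le_mul _ (hCBb τ) (abs_nonneg _) (by positivity)
                exact mul_le_mul (hC1 t τ s') (hCN s') (abs_nonneg _) hC1n
        have hi2 : Integrable (fun s' => β₁ t τ s' * f τ s')
            (volume.restrict (Set.Ioo (0:ℝ) 1)) := by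
          apply integrable_bdd (C := C1 * Cf)
            ((hβ₁m.comp (hmap2 t τ)).mul
              (hfm.comp (measurable_const.prodMk measurable_id))).aestronglyMeasurable
          refine Filter.Eventually.of_forall fun s' => ?_
          calc |β₁ t τ s' * f τ s'| = |β₁ t τ s'| * |f τ s'| := abs_mul _ _
            _ ≤ C1 * Cf := mul_le_mul (hC1 t τ s') (hCf τ s') (abs_nonneg _) hC1n
        have hexp : ∀ s' : ℝ, β₁ t τ s' * (N s' * B τ + f τ s')
            = β₁ t τ s' * N s' * B τ + β₁ t τ s' * f τ s' := fun s' => by ring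
        simp only [hexp]
        rw [integral_add hi1 hi2, integral_mul_const]
      simp only [hinner]
      have hi3 : Integrable (fun τ => K t τ * B τ) (volume.restrict (Set.Ioo 0 t)) := by
        apply integrable_bdd (C := M * CB)
          ((hKm.comp (measurable_const.prodMk measurable_id)).mul hBm).aestronglyMeasurable
        refine Filter.Eventually.of_forall fun τ => ?_
        calc |K t τ * B τ| = |K t τ| * |B τ| := abs_mul _ _
          _ ≤ M * CB := mul_le_mul (hKb t τ) (hCBb τ) (abs_nonneg _) hM
      have hi4 : Integrable (fun τ => Fm t τ) (volume.restrict (Set.Ioo 0 t)) := by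
        apply integrable_bdd (C := C1 * Cf)
          (hFmm.comp (measurable_const.prodMk measurable_id)).aestronglyMeasurable
        exact Filter.Eventually.of_forall fun τ => hFmb t τ
      rw [integral_add hi3 hi4, hBeq t ⟨ht.1.le, ht.2.le⟩]
      simp only [hhdef, hFdef, hh2def]
      ring
    have hT2 : (∫ t in Set.Ioo 0 T, ∫ s in Set.Ioo (0:ℝ) 1,
        (N s * ((∫ τ in Set.Ioo 0 t, ∫ s' in Set.Ioo (0:ℝ) 1,
            β₁ t τ s' * (N s' * B τ + f τ s')) +
          ∫ Y in Set.Ioo (1:ℝ) b ×ˢ Set.Ioo (1:ℝ) b, β₂ t Y * ρ0 Y) + f t s) * φ₁ t t s)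
        = ∫ t in Set.Ioo 0 T, ∫ s in Set.Ioo (0:ℝ) 1, (N s * B t + f t s) * φ₁ t t s := by
      apply setIntegral_congr_fun measurableSet_Ioo
      intro t ht
      beta_reduce
      rw [hBig t ht]
    rw [hT2]
    have e2 : (∫ t in Set.Ioo 0 T, ∫ τ in Set.Ioo 0 t, ∫ s in Set.Ioo (0:ℝ) 1,
        (N s * B τ + f τ s) * fderiv ℝ (fun p : ℝ × ℝ × ℝ => φ₁ p.1 p.2.1 p.2.2) (t, (τ, s)) (1, 0))
        = -∫ t in Set.Ioo 0 T, ∫ s in Set.Ioo (0:ℝ) 1, (N s * B t + f t s) * φ₁ t t s := by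
      have hΦm : Measurable fun p : ℝ × ℝ => ∫ s in Set.Ioo (0:ℝ) 1,
          (N s * B p.2 + f p.2 s) *
            fderiv ℝ (fun p : ℝ × ℝ × ℝ => φ₁ p.1 p.2.1 p.2.2) (p.1, (p.2, s)) (1, 0) := by
        apply StronglyMeasurable.measurable
        exact StronglyMeasurable.integral_prod_right'
          (f := fun q : (ℝ × ℝ) × ℝ => (N q.2 * B q.1.2 + f q.1.2 q.2) *
            fderiv ℝ (fun p : ℝ × ℝ × ℝ => φ₁ p.1 p.2.1 p.2.2) (q.1.1, (q.1.2, q.2)) (1, 0))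
          ((((hNm.comp measurable_snd).mul (hBm.comp measurable_fst.snd)).add
            (hfm.comp (measurable_fst.snd.prodMk measurable_snd))).mul
            ((cont_D hφ).measurable.comp hmap1)).stronglyMeasurable
      have hΦb : ∀ t ∈ Set.Ioo (0:ℝ) T, ∀ τ ∈ Set.Ioo (0:ℝ) T,
          |∫ s in Set.Ioo (0:ℝ) 1, (N s * B τ + f τ s) *
            fderiv ℝ (fun p : ℝ × ℝ × ℝ => φ₁ p.1 p.2.1 p.2.2) (t, (τ, s)) (1, 0)|
          ≤ Cg * max CD 0 := by
        intro t ht τ hτ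
        have h1 : |∫ s in Set.Ioo (0:ℝ) 1, (N s * B τ + f τ s) *
            fderiv ℝ (fun p : ℝ × ℝ × ℝ => φ₁ p.1 p.2.1 p.2.2) (t, (τ, s)) (1, 0)|
            ≤ (volume.restrict (Set.Ioo (0:ℝ) 1) Set.univ).toReal * (Cg * max CD 0) := by
          apply abs_integral_le
          rw [ae_restrict_iff' measurableSet_Ioo]
          refine Filter.Eventually.of_forall fun s hs => ?_
          have hmemK : (t, (τ, s)) ∈ Set.Icc (0:ℝ) T ×ˢ
              (Set.Icc (0:ℝ) T ×ˢ Set.Icc (0:ℝ) 1) :=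
            ⟨⟨ht.1.le, ht.2.le⟩, ⟨⟨hτ.1.le, hτ.2.le⟩, ⟨hs.1.le, hs.2.le⟩⟩⟩
          calc |(N s * B τ + f τ s) *
              fderiv ℝ (fun p : ℝ × ℝ × ℝ => φ₁ p.1 p.2.1 p.2.2) (t, (τ, s)) (1, 0)|
              = |N s * B τ + f τ s| *
                ‖fderiv ℝ (fun p : ℝ × ℝ × ℝ => φ₁ p.1 p.2.1 p.2.2) (t, (τ, s)) (1, 0)‖ := by
                rw [abs_mul, Real.norm_eq_abs]
            _ ≤ Cg * max CD 0 := mul_le_mul (hgb τ s)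
                (le_max_of_le_left (hCD _ hmemK)) (norm_nonneg _) hCg0
        rwa [Measure.restrict_apply_univ, hvol1, one_mul] at h1
      have hsw : (∫ t in Set.Ioo 0 T, ∫ τ in Set.Ioo 0 t, ∫ s in Set.Ioo (0:ℝ) 1,
          (N s * B τ + f τ s) *
            fderiv ℝ (fun p : ℝ × ℝ × ℝ => φ₁ p.1 p.2.1 p.2.2) (t, (τ, s)) (1, 0))
          = ∫ τ in Set.Ioo 0 T, ∫ t in Set.Ioo τ T, ∫ s in Set.Ioo (0:ℝ) 1,
          (N s * B τ + f τ s) *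
            fderiv ℝ (fun p : ℝ × ℝ × ℝ => φ₁ p.1 p.2.1 p.2.2) (t, (τ, s)) (1, 0) :=
        tri_swap hT hΦm hΦb
      rw [hsw]
      have hin2 : ∀ τ ∈ Set.Ioo (0:ℝ) T,
          (∫ t in Set.Ioo τ T, ∫ s in Set.Ioo (0:ℝ) 1, (N s * B τ + f τ s) *
            fderiv ℝ (fun p : ℝ × ℝ × ℝ => φ₁ p.1 p.2.1 p.2.2) (t, (τ, s)) (1, 0))
          = -(∫ s in Set.Ioo (0:ℝ) 1, (N s * B τ + f τ s) * φ₁ τ τ s) := by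
        intro τ hτ
        haveI := finIoo τ T
        have hswi : (∫ t in Set.Ioo τ T, ∫ s in Set.Ioo (0:ℝ) 1, (N s * B τ + f τ s) *
            fderiv ℝ (fun p : ℝ × ℝ × ℝ => φ₁ p.1 p.2.1 p.2.2) (t, (τ, s)) (1, 0))
            = ∫ s in Set.Ioo (0:ℝ) 1, ∫ t in Set.Ioo τ T, (N s * B τ + f τ s) *
            fderiv ℝ (fun p : ℝ × ℝ × ℝ => φ₁ p.1 p.2.1 p.2.2) (t, (τ, s)) (1, 0) := by
          apply integral_integral_swap
          apply integrable_bdd (C := Cg * max CD 0)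
          · exact ((((hNm.comp measurable_snd).mul measurable_const).add
              (hfm.comp (measurable_const.prodMk measurable_snd))).mul
              ((cont_D hφ).measurable.comp (measurable_fst.prodMk
                (measurable_const.prodMk measurable_snd)))).aestronglyMeasurable
          · have hmem : ∀ᵐ p ∂((volume.restrict (Set.Ioo τ T)).prod
                (volume.restrict (Set.Ioo (0:ℝ) 1))),
                p ∈ Set.Ioo τ T ×ˢ Set.Ioo (0:ℝ) 1 := by
              rw [Measure.prod_restrict]
              exact ae_restrict_mem (measurableSet_Ioo.prod measurableSet_Ioo)
            refine hmem.mono fun p hp => ?_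
            have hmemK : (p.1, (τ, p.2)) ∈ Set.Icc (0:ℝ) T ×ˢ
                (Set.Icc (0:ℝ) T ×ˢ Set.Icc (0:ℝ) 1) :=
              ⟨⟨hτ.1.le.trans hp.1.1.le, hp.1.2.le⟩,
                ⟨⟨hτ.1.le, hτ.2.le⟩, ⟨hp.2.1.le, hp.2.2.le⟩⟩⟩
            calc |Function.uncurry (fun t s => (N s * B τ + f τ s) *
                fderiv ℝ (fun p : ℝ × ℝ × ℝ => φ₁ p.1 p.2.1 p.2.2) (t, (τ, s)) (1, 0)) p|
                = |N p.2 * B τ + f τ p.2| *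
                  ‖fderiv ℝ (fun p : ℝ × ℝ × ℝ => φ₁ p.1 p.2.1 p.2.2) (p.1, (τ, p.2)) (1, 0)‖ := by
                  rw [Function.uncurry, abs_mul, Real.norm_eq_abs]
              _ ≤ Cg * max CD 0 := mul_le_mul (hgb τ p.2)
                  (le_max_of_le_left (hCD _ hmemK)) (norm_nonneg _) hCg0
        rw [hswi]
        have hps : ∀ s : ℝ, (∫ t in Set.Ioo τ T, (N s * B τ + f τ s) *
            fderiv ℝ (fun p : ℝ × ℝ × ℝ => φ₁ p.1 p.2.1 p.2.2) (t, (τ, s)) (1, 0))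
            = -((N s * B τ + f τ s) * φ₁ τ τ s) := by
          intro s
          rw [integral_const_mul, ftc hφ (τ, s) hτ.2.le]
          show (N s * B τ + f τ s) * (φ₁ T τ s - φ₁ τ τ s) = _
          rw [hφT τ s]; ring
        simp only [hps]
        rw [integral_neg]
      rw [setIntegral_congr_fun measurableSet_Ioo (fun τ hτ => hin2 τ hτ), integral_neg]
    rw [e2]
    exact neg_add_cancel _
  · -- weak formulation for ρ₂
    intro φ₂ hφ hφT
    beta_reduce
    have hder : ∀ (t : ℝ) (Y : ℝ × ℝ), deriv (fun u => φ₂ u Y) t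
        = fderiv ℝ (fun p : ℝ × (ℝ × ℝ) => φ₂ p.1 p.2) (t, Y) (1, 0) :=
      fun t Y => HasDerivAt.deriv (deriv_line hφ Y t)
    simp only [hder]
    obtain ⟨CD, hCD⟩ := ((isCompact_Icc (a := (0:ℝ)) (b := T)).prod
      ((isCompact_Icc (a := (1:ℝ)) (b := b)).prod (isCompact_Icc (a := (1:ℝ)) (b := b)))).exists_bound_of_continuousOn
      (cont_D hφ).continuousOn
    have hswap : (∫ t in Set.Ioo 0 T, ∫ Y in Set.Ioo (1:ℝ) b ×ˢ Set.Ioo (1:ℝ) b,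
          ρ0 Y * fderiv ℝ (fun p : ℝ × (ℝ × ℝ) => φ₂ p.1 p.2) (t, Y) (1, 0))
        = ∫ Y in Set.Ioo (1:ℝ) b ×ˢ Set.Ioo (1:ℝ) b, ∫ t in Set.Ioo 0 T,
          ρ0 Y * fderiv ℝ (fun p : ℝ × (ℝ × ℝ) => φ₂ p.1 p.2) (t, Y) (1, 0) := by
      apply integral_integral_swap
      apply integrable_bdd (C := C0 * max CD 0)
      · exact ((hρ0m.comp measurable_snd).mul
          ((cont_D hφ).measurable.comp (measurable_fst.prodMk measurable_snd))).aestronglyMeasurable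
      · have hmem : ∀ᵐ p ∂((volume.restrict (Set.Ioo (0:ℝ) T)).prod
            (volume.restrict (Set.Ioo (1:ℝ) b ×ˢ Set.Ioo (1:ℝ) b))),
            p ∈ Set.Ioo (0:ℝ) T ×ˢ (Set.Ioo (1:ℝ) b ×ˢ Set.Ioo (1:ℝ) b) := by
          rw [Measure.prod_restrict]
          exact ae_restrict_mem (measurableSet_Ioo.prod (measurableSet_Ioo.prod measurableSet_Ioo))
        refine hmem.mono fun p hp => ?_
        have hpK : (p.1, p.2) ∈ Set.Icc (0:ℝ) T ×ˢ (Set.Icc (1:ℝ) b ×ˢ Set.Icc (1:ℝ) b) := by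
          refine ⟨⟨hp.1.1.le, hp.1.2.le⟩, ⟨⟨hp.2.1.1.le, hp.2.1.2.le⟩, ⟨hp.2.2.1.le, hp.2.2.2.le⟩⟩⟩
        calc |Function.uncurry (fun t Y => ρ0 Y *
              fderiv ℝ (fun p : ℝ × (ℝ × ℝ) => φ₂ p.1 p.2) (t, Y) (1, 0)) p|
            = |ρ0 p.2| * ‖fderiv ℝ (fun p : ℝ × (ℝ × ℝ) => φ₂ p.1 p.2) (p.1, p.2) (1, 0)‖ := by
              rw [Function.uncurry, abs_mul, Real.norm_eq_abs]
          _ ≤ C0 * max CD 0 :=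
              mul_le_mul (hC0 p.2) (le_max_of_le_left (hCD _ hpK)) (norm_nonneg _) hC0n
    rw [hswap]
    have hin : ∀ Y : ℝ × ℝ, (∫ t in Set.Ioo 0 T,
        ρ0 Y * fderiv ℝ (fun p : ℝ × (ℝ × ℝ) => φ₂ p.1 p.2) (t, Y) (1, 0))
        = -(ρ0 Y * φ₂ 0 Y) := by
      intro Y
      rw [integral_const_mul, ftc hφ Y hT.le]
      show ρ0 Y * (φ₂ T Y - φ₂ 0 Y) = _
      rw [hφT Y]; ring
    simp only [hin]
    rw [integral_neg]
    exact neg_add_cancel _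
end

section
/- Let T > 0, b > 1, Ω = (1,b)×(1,b) ⊂ ℝ², B > 0. Let ρ⁰ ∈ L∞(Ω), let N ∈ L∞(0,1) satisfy N ≥ 0 and ∫₀¹ N(s) ds = 1, let β̃₁ be measurable on (0,T)×(0,T)×(0,1) with |β̃₁| ≤ B, let β̃₂ be measurable on (0,T)×Ω with |β̃₂| ≤ B, and let f ∈ L∞((0,T)×(0,1)). Suppose g ∈ L∞((0,T)×(0,1)) satisfies, for almost every (τ,s) ∈ (0,T)×(0,1), the renewal equation g(τ,s) = N(s)·[ ∫₀^τ ∫₀¹ β̃₁(τ,τ',s') g(τ',s') ds' dτ' + ∫_Ω β̃₂(τ,Y) ρ⁰(Y) dY ] + f(τ,s). Then for every t ∈ [0,T]: ∫₀ᵗ ∫₀¹ |g(τ,s)| ds dτ + ‖ρ⁰‖_{L¹(Ω)} ≤ e^{B·t}·‖ρ⁰‖_{L¹(Ω)} + ∫₀ᵗ e^{B·(t−u)} ( ∫₀¹ |f(u,s)| ds ) du. -/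
open MeasureTheory

private lemma integrable_bdd_set {α : Type*} [MeasurableSpace α] {μ : Measure α} {s : Set α}
    (hs : μ s < ⊤) {f : α → ℝ} {C : ℝ}
    (hm : AEStronglyMeasurable f (μ.restrict s))
    (h : ∀ᵐ x ∂(μ.restrict s), |f x| ≤ C) : Integrable f (μ.restrict s) := by
  haveI : IsFiniteMeasure (μ.restrict s) :=
    ⟨by simpa [Measure.restrict_apply_univ] using hs⟩
  exact (integrable_const C).mono' hm (by simpa only [Real.norm_eq_abs] using h)

set_option maxHeartbeats 2000000 in
/-- **Continuous L¹ a priori estimate for the renewal equation.** If `g ∈ L∞((0,T)×(0,1))`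
satisfies the renewal equation
`g(τ,s) = N(s) (∫₀^τ ∫₀¹ β̃₁ g + ∫_Ω β̃₂ ρ⁰) + f(τ,s)` a.e., with `N ≥ 0`, `∫₀¹ N = 1` and
`|β̃₁|, |β̃₂| ≤ B` on their domains, then for every `t ∈ [0,T]`,
`∫₀ᵗ ∫₀¹ |g| + ‖ρ⁰‖_{L¹(Ω)} ≤ e^{Bt} ‖ρ⁰‖_{L¹(Ω)} + ∫₀ᵗ e^{B(t-u)} ∫₀¹ |f(u,s)| ds du`. -/
theorem stmt18 (T b B : ℝ) (hT : 0 < T) (hb : 1 < b) (hB : 0 < B)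
    (ρ0 : ℝ × ℝ → ℝ) (hρ0m : Measurable ρ0) (hρ0bd : ∃ C, ∀ Y, |ρ0 Y| ≤ C)
    (N : ℝ → ℝ) (hNm : Measurable N) (hNbd : ∃ C, ∀ s, |N s| ≤ C)
    (hNpos : ∀ s ∈ Set.Ioo (0:ℝ) 1, 0 ≤ N s)
    (hNint : (∫ s in Set.Ioo (0:ℝ) 1, N s) = 1)
    (β₁ : ℝ → ℝ → ℝ → ℝ) (hβ₁m : Measurable fun p : ℝ × ℝ × ℝ => β₁ p.1 p.2.1 p.2.2)
    (hβ₁bd : ∀ t ∈ Set.Ioo (0:ℝ) T, ∀ τ ∈ Set.Ioo (0:ℝ) T, ∀ s ∈ Set.Ioo (0:ℝ) 1,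
      |β₁ t τ s| ≤ B)
    (β₂ : ℝ → ℝ × ℝ → ℝ) (hβ₂m : Measurable fun p : ℝ × (ℝ × ℝ) => β₂ p.1 p.2)
    (hβ₂bd : ∀ t ∈ Set.Ioo (0:ℝ) T, ∀ Y ∈ Set.Ioo (1:ℝ) b ×ˢ Set.Ioo (1:ℝ) b, |β₂ t Y| ≤ B)
    (f : ℝ → ℝ → ℝ) (hfm : Measurable fun p : ℝ × ℝ => f p.1 p.2)
    (hfbd : ∃ C, ∀ t s, |f t s| ≤ C)
    (g : ℝ → ℝ → ℝ) (hgm : Measurable fun p : ℝ × ℝ => g p.1 p.2)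
    (hgbd : ∃ C, ∀ τ s, |g τ s| ≤ C)
    (heq : ∀ᵐ p ∂(volume.restrict (Set.Ioo 0 T ×ˢ Set.Ioo (0:ℝ) 1)),
      g p.1 p.2 =
        N p.2 * ((∫ τ' in Set.Ioo 0 p.1, ∫ s' in Set.Ioo (0:ℝ) 1, β₁ p.1 τ' s' * g τ' s') +
            ∫ Y in Set.Ioo (1:ℝ) b ×ˢ Set.Ioo (1:ℝ) b, β₂ p.1 Y * ρ0 Y) +
          f p.1 p.2) :
    ∀ t ∈ Set.Icc (0:ℝ) T,
      (∫ τ in Set.Ioo 0 t, ∫ s in Set.Ioo (0:ℝ) 1, |g τ s|) +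
          (∫ Y in Set.Ioo (1:ℝ) b ×ˢ Set.Ioo (1:ℝ) b, |ρ0 Y|) ≤
        Real.exp (B * t) * (∫ Y in Set.Ioo (1:ℝ) b ×ˢ Set.Ioo (1:ℝ) b, |ρ0 Y|) +
          ∫ u in Set.Ioo 0 t, Real.exp (B * (t - u)) * ∫ s in Set.Ioo (0:ℝ) 1, |f u s| := by
  classical
  obtain ⟨Cg, hCg⟩ := hgbd
  obtain ⟨Cf, hCf⟩ := hfbd
  obtain ⟨CN, hCN⟩ := hNbd
  obtain ⟨Cρ, hCρ⟩ := hρ0bd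
  have hCg0 : 0 ≤ Cg := le_trans (abs_nonneg _) (hCg 0 0)
  have hCf0 : 0 ≤ Cf := le_trans (abs_nonneg _) (hCf 0 0)
  have hCρ0 : 0 ≤ Cρ := le_trans (abs_nonneg _) (hCρ 0)
  set Ω : Set (ℝ × ℝ) := Set.Ioo (1:ℝ) b ×ˢ Set.Ioo (1:ℝ) b with hΩ
  have hΩmeas : MeasurableSet Ω := measurableSet_Ioo.prod measurableSet_Ioo
  have hΩfin : volume Ω < ⊤ := by
    rw [hΩ, Measure.volume_eq_prod, Measure.prod_prod, Real.volume_Ioo]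
    exact ENNReal.mul_lt_top ENNReal.ofReal_lt_top ENNReal.ofReal_lt_top
  have hvolIoo : ∀ x : ℝ, volume (Set.Ioo (0:ℝ) x) < ⊤ := by
    intro x; rw [Real.volume_Ioo]; exact ENNReal.ofReal_lt_top
  have hIoo01 : (volume (Set.Ioo (0:ℝ) 1)).toReal = 1 := by
    rw [Real.volume_Ioo]; norm_num
  set R : ℝ := ∫ Y in Ω, |ρ0 Y| with hR
  have hR0 : 0 ≤ R := integral_nonneg fun Y => abs_nonneg _
  set φ : ℝ → ℝ := fun τ => ∫ s in Set.Ioo (0:ℝ) 1, |g τ s| with hφ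
  set F : ℝ → ℝ := fun u => ∫ s in Set.Ioo (0:ℝ) 1, |f u s| with hF
  -- measurability of φ and F
  have hφm : Measurable φ := by
    have : StronglyMeasurable (Function.uncurry fun τ s => |g τ s|) :=
      (hgm.abs).stronglyMeasurable
    exact (this.integral_prod_right (ν := volume.restrict (Set.Ioo 0 1))).measurable
  have hFm : Measurable F := by
    have : StronglyMeasurable (Function.uncurry fun τ s => |f τ s|) :=
      (hfm.abs).stronglyMeasurable
    exact (this.integral_prod_right (ν := volume.restrict (Set.Ioo 0 1))).measurable
  have habs_int : ∀ (h : ℝ → ℝ → ℝ), (Measurable fun p : ℝ × ℝ => h p.1 p.2) →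
      (∀ t s, |h t s| ≤ Cg + Cf) → ∀ τ : ℝ,
      Integrable (fun s => |h τ s|) (volume.restrict (Set.Ioo (0:ℝ) 1)) := by
    intro h hm hbd τ
    refine integrable_bdd_set (C := Cg + Cf) (hvolIoo 1)
      ((hm.comp (measurable_const.prodMk measurable_id)).abs).aestronglyMeasurable
      (Filter.Eventually.of_forall fun s => ?_)
    rw [abs_abs]; exact hbd τ s
  have hgint : ∀ τ, Integrable (fun s => |g τ s|) (volume.restrict (Set.Ioo (0:ℝ) 1)) :=
    habs_int g hgm (fun t s => le_trans (hCg t s) (by linarith)) 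
  have hfint : ∀ τ, Integrable (fun s => |f τ s|) (volume.restrict (Set.Ioo (0:ℝ) 1)) :=
    habs_int f hfm (fun t s => le_trans (hCf t s) (by linarith))
  have hφ_nonneg : ∀ τ, 0 ≤ φ τ := fun τ => integral_nonneg fun s => abs_nonneg _
  have hφ_bd : ∀ τ, φ τ ≤ Cg := by
    intro τ
    calc φ τ ≤ ∫ _ in Set.Ioo (0:ℝ) 1, Cg := by
          refine integral_mono_ae (hgint τ) (integrable_const _)
            (Filter.Eventually.of_forall fun s => hCg τ s)
      _ = Cg := by rw [setIntegral_const, measureReal_def, hIoo01, one_smul]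
  have hF_nonneg : ∀ u, 0 ≤ F u := fun u => integral_nonneg fun s => abs_nonneg _
  have hF_bd : ∀ u, F u ≤ Cf := by
    intro u
    calc F u ≤ ∫ _ in Set.Ioo (0:ℝ) 1, Cf := by
          refine integral_mono_ae (hfint u) (integrable_const _)
            (Filter.Eventually.of_forall fun s => hCf u s)
      _ = Cf := by rw [setIntegral_const, measureReal_def, hIoo01, one_smul]
  -- interval integrability of φ, F
  have hufin : ∀ a c : ℝ, volume (Set.uIoc a c) < ⊤ := by
    intro a c
    rw [Set.uIoc_eq_union]
    refine lt_of_le_of_lt (measure_union_le _ _) ?_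
    rw [Real.volume_Ioc, Real.volume_Ioc]
    exact ENNReal.add_lt_top.mpr ⟨ENNReal.ofReal_lt_top, ENNReal.ofReal_lt_top⟩
  have hφii : ∀ a c : ℝ, IntervalIntegrable φ volume a c := by
    intro a c
    rw [intervalIntegrable_iff]
    refine integrable_bdd_set (C := Cg) (hufin a c) hφm.aestronglyMeasurable ?_
    exact Filter.Eventually.of_forall fun x => abs_le.mpr ⟨by linarith [hφ_nonneg x, hCg0], hφ_bd x⟩
  have hFii : ∀ a c : ℝ, IntervalIntegrable F volume a c := by
    intro a c
    rw [intervalIntegrable_iff]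
    refine integrable_bdd_set (C := Cf) (hufin a c) hFm.aestronglyMeasurable ?_
    exact Filter.Eventually.of_forall fun x => abs_le.mpr ⟨by linarith [hF_nonneg x, hCf0], hF_bd x⟩
  set Φ : ℝ → ℝ := fun x => ∫ τ in (0:ℝ)..x, φ τ with hΦdef
  have hΦcont : Continuous Φ := intervalIntegral.continuous_primitive hφii 0
  set A : ℝ → ℝ := fun x => B * R * x + ∫ u in (0:ℝ)..x, F u with hAdef
  have hAcont : Continuous A :=
    ((continuous_const.mul continuous_id)).add (intervalIntegral.continuous_primitive hFii 0)
  have hΦIoo : ∀ x : ℝ, 0 ≤ x → Φ x = ∫ τ in Set.Ioo (0:ℝ) x, φ τ := by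
    intro x hx
    simp only [hΦdef]
    rw [intervalIntegral.integral_of_le hx, integral_Ioc_eq_integral_Ioo]
  have hφint' : ∀ x : ℝ, Integrable φ (volume.restrict (Set.Ioo (0:ℝ) x)) := fun x =>
    integrable_bdd_set (hvolIoo x) hφm.aestronglyMeasurable
      (Filter.Eventually.of_forall fun τ => abs_le.mpr ⟨by linarith [hφ_nonneg τ], hφ_bd τ⟩)
  have hFint' : ∀ x : ℝ, Integrable F (volume.restrict (Set.Ioo (0:ℝ) x)) := fun x =>
    integrable_bdd_set (hvolIoo x) hFm.aestronglyMeasurable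
      (Filter.Eventually.of_forall fun τ => abs_le.mpr ⟨by linarith [hF_nonneg τ], hF_bd τ⟩)
  have hNint' : Integrable N (volume.restrict (Set.Ioo (0:ℝ) 1)) :=
    integrable_bdd_set (hvolIoo 1) hNm.aestronglyMeasurable
      (Filter.Eventually.of_forall hCN)
  -- KEY STEP : renewal inequality
  have hkey : ∀ᵐ τ ∂(volume.restrict (Set.Ioo (0:ℝ) T)), φ τ ≤ B * Φ τ + B * R + F τ := by
    have hprod : ∀ᵐ τ ∂(volume.restrict (Set.Ioo (0:ℝ) T)),
        ∀ᵐ s ∂(volume.restrict (Set.Ioo (0:ℝ) 1)),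
        g τ s = N s * ((∫ τ' in Set.Ioo 0 τ, ∫ s' in Set.Ioo (0:ℝ) 1, β₁ τ τ' s' * g τ' s')
          + ∫ Y in Ω, β₂ τ Y * ρ0 Y) + f τ s := by
      have heq' : ∀ᵐ p ∂((volume.restrict (Set.Ioo (0:ℝ) T)).prod
          (volume.restrict (Set.Ioo (0:ℝ) 1))),
          g p.1 p.2 = N p.2 * ((∫ τ' in Set.Ioo 0 p.1,
              ∫ s' in Set.Ioo (0:ℝ) 1, β₁ p.1 τ' s' * g τ' s')
            + ∫ Y in Ω, β₂ p.1 Y * ρ0 Y) + f p.1 p.2 := by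
        rw [Measure.prod_restrict, ← Measure.volume_eq_prod]
        exact heq
      exact Measure.ae_ae_of_ae_prod heq'
    filter_upwards [hprod, ae_restrict_mem measurableSet_Ioo] with τ hτeq hτmem
    set I₂ : ℝ := ∫ Y in Ω, β₂ τ Y * ρ0 Y with hI₂
    have hI₂bd : |I₂| ≤ B * R := by
      have hmeas2 : AEStronglyMeasurable (fun Y => β₂ τ Y * ρ0 Y) (volume.restrict Ω) :=
        ((hβ₂m.comp (measurable_const.prodMk measurable_id)).mul hρ0m).aestronglyMeasurable
      have hintL : Integrable (fun Y => β₂ τ Y * ρ0 Y) (volume.restrict Ω) := by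
        refine integrable_bdd_set (C := B * Cρ) hΩfin hmeas2 ?_
        filter_upwards [ae_restrict_mem hΩmeas] with Y hY
        rw [abs_mul]
        exact mul_le_mul (hβ₂bd τ hτmem Y hY) (hCρ Y) (abs_nonneg _) hB.le
      have hintR : Integrable (fun Y => B * |ρ0 Y|) (volume.restrict Ω) := by
        refine integrable_bdd_set (C := B * Cρ) hΩfin
          ((hρ0m.abs.const_mul B)).aestronglyMeasurable
          (Filter.Eventually.of_forall fun Y => ?_)
        rw [abs_mul, abs_of_nonneg hB.le, abs_abs]
        exact mul_le_mul_of_nonneg_left (hCρ Y) hB.le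
      calc |I₂| ≤ ∫ Y in Ω, |β₂ τ Y * ρ0 Y| := by
            simpa only [Real.norm_eq_abs] using
              norm_integral_le_integral_norm (μ := volume.restrict Ω)
                (fun Y => β₂ τ Y * ρ0 Y)
        _ ≤ ∫ Y in Ω, B * |ρ0 Y| := by
            refine integral_mono_ae hintL.abs hintR ?_
            filter_upwards [ae_restrict_mem hΩmeas] with Y hY
            rw [abs_mul]
            exact mul_le_mul_of_nonneg_right (hβ₂bd τ hτmem Y hY) (abs_nonneg _)
        _ = B * R := by rw [integral_const_mul]
    set inn : ℝ → ℝ := fun τ' => ∫ s' in Set.Ioo (0:ℝ) 1, β₁ τ τ' s' * g τ' s' with hinn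
    have hinnm : Measurable inn := by
      have : StronglyMeasurable (Function.uncurry fun τ' s' => β₁ τ τ' s' * g τ' s') :=
        ((hβ₁m.comp (measurable_const.prodMk measurable_id)).mul hgm).stronglyMeasurable
      exact (this.integral_prod_right (ν := volume.restrict (Set.Ioo 0 1))).measurable
    have hinnbd : ∀ τ' ∈ Set.Ioo (0:ℝ) τ, |inn τ'| ≤ B * φ τ' := by
      intro τ' hτ'
      have hτ'T : τ' ∈ Set.Ioo (0:ℝ) T := ⟨hτ'.1, lt_trans hτ'.2 hτmem.2⟩
      have hintL : Integrable (fun s' => β₁ τ τ' s' * g τ' s')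
          (volume.restrict (Set.Ioo (0:ℝ) 1)) := by
        refine integrable_bdd_set (C := B * Cg) (hvolIoo 1)
          (((hβ₁m.comp (measurable_const.prodMk
            (measurable_const.prodMk measurable_id))).mul
            (hgm.comp (measurable_const.prodMk measurable_id))).aestronglyMeasurable) ?_
        filter_upwards [ae_restrict_mem measurableSet_Ioo] with s' hs'
        rw [abs_mul]
        exact mul_le_mul (hβ₁bd τ hτmem τ' hτ'T s' hs') (hCg τ' s') (abs_nonneg _) hB.le
      have hintR : Integrable (fun s' => B * |g τ' s'|)
          (volume.restrict (Set.Ioo (0:ℝ) 1)) := (hgint τ').const_mul B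
      calc |inn τ'| ≤ ∫ s' in Set.Ioo (0:ℝ) 1, |β₁ τ τ' s' * g τ' s'| := by
            simpa only [Real.norm_eq_abs] using
              norm_integral_le_integral_norm (μ := volume.restrict (Set.Ioo (0:ℝ) 1))
                (fun s' => β₁ τ τ' s' * g τ' s')
        _ ≤ ∫ s' in Set.Ioo (0:ℝ) 1, B * |g τ' s'| := by
            refine integral_mono_ae hintL.abs hintR ?_
            filter_upwards [ae_restrict_mem measurableSet_Ioo] with s' hs'
            rw [abs_mul]
            exact mul_le_mul_of_nonneg_right (hβ₁bd τ hτmem τ' hτ'T s' hs') (abs_nonneg _)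
        _ = B * φ τ' := by rw [integral_const_mul]
    have hI₁bd : |∫ τ' in Set.Ioo (0:ℝ) τ, inn τ'| ≤ B * Φ τ := by
      have hintL : Integrable inn (volume.restrict (Set.Ioo (0:ℝ) τ)) := by
        refine integrable_bdd_set (C := B * Cg) (hvolIoo τ)
          hinnm.aestronglyMeasurable ?_
        filter_upwards [ae_restrict_mem measurableSet_Ioo] with τ' hτ'
        exact le_trans (hinnbd τ' hτ')
          (mul_le_mul_of_nonneg_left (hφ_bd τ') hB.le)
      have hintR : Integrable (fun τ' => B * φ τ')
          (volume.restrict (Set.Ioo (0:ℝ) τ)) := (hφint' τ).const_mul B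
      calc |∫ τ' in Set.Ioo (0:ℝ) τ, inn τ'| ≤ ∫ τ' in Set.Ioo (0:ℝ) τ, |inn τ'| := by
            simpa only [Real.norm_eq_abs] using
              norm_integral_le_integral_norm (μ := volume.restrict (Set.Ioo (0:ℝ) τ)) inn
        _ ≤ ∫ τ' in Set.Ioo (0:ℝ) τ, B * φ τ' := by
            refine integral_mono_ae hintL.abs hintR ?_
            filter_upwards [ae_restrict_mem measurableSet_Ioo] with τ' hτ'
            exact hinnbd τ' hτ'
        _ = B * Φ τ := by rw [integral_const_mul, ← hΦIoo τ (le_of_lt hτmem.1)]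
    have hKbd : |(∫ τ' in Set.Ioo (0:ℝ) τ, inn τ') + I₂| ≤ B * Φ τ + B * R :=
      le_trans (abs_add_le _ _) (add_le_add hI₁bd hI₂bd)
    have hptwise : ∀ᵐ s ∂(volume.restrict (Set.Ioo (0:ℝ) 1)),
        |g τ s| ≤ N s * (B * Φ τ + B * R) + |f τ s| := by
      filter_upwards [hτeq, ae_restrict_mem measurableSet_Ioo] with s hseq hsmem
      rw [hseq]
      calc |N s * ((∫ τ' in Set.Ioo (0:ℝ) τ, inn τ') + I₂) + f τ s|
          ≤ |N s * ((∫ τ' in Set.Ioo (0:ℝ) τ, inn τ') + I₂)| + |f τ s| := abs_add_le _ _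
        _ = N s * |(∫ τ' in Set.Ioo (0:ℝ) τ, inn τ') + I₂| + |f τ s| := by
            rw [abs_mul, abs_of_nonneg (hNpos s hsmem)]
        _ ≤ N s * (B * Φ τ + B * R) + |f τ s| :=
            add_le_add_left (mul_le_mul_of_nonneg_left hKbd (hNpos s hsmem)) _
    have hintR2 : Integrable (fun s => N s * (B * Φ τ + B * R) + |f τ s|)
        (volume.restrict (Set.Ioo (0:ℝ) 1)) :=
      (hNint'.mul_const _).add (hfint τ)
    calc φ τ ≤ ∫ s in Set.Ioo (0:ℝ) 1, (N s * (B * Φ τ + B * R) + |f τ s|) :=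
          integral_mono_ae (hgint τ) hintR2 hptwise
      _ = (∫ s in Set.Ioo (0:ℝ) 1, N s) * (B * Φ τ + B * R) + F τ := by
          rw [integral_add (hNint'.mul_const _) (hfint τ), integral_mul_const]
      _ = B * Φ τ + B * R + F τ := by rw [hNint]; ring
  set G : ℝ → ℝ := fun x => ∫ v in (0:ℝ)..x, Φ v with hGdef
  have hG' : ∀ x : ℝ, HasDerivAt G (Φ x) x := fun x =>
    intervalIntegral.integral_hasDerivAt_right (hΦcont.intervalIntegrable _ _)
      (hΦcont.stronglyMeasurableAtFilter _ _) hΦcont.continuousAt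
  have hB1 : ∀ x ∈ Set.Icc (0:ℝ) T, Φ x ≤ A x + B * G x := by
    intro x hx
    have hkx : ∀ᵐ τ ∂(volume.restrict (Set.Ioo (0:ℝ) x)), φ τ ≤ B * Φ τ + B * R + F τ :=
      ae_restrict_of_ae_restrict_of_subset (Set.Ioo_subset_Ioo le_rfl hx.2) hkey
    have hΦIox : Integrable (fun τ => B * Φ τ) (volume.restrict (Set.Ioo (0:ℝ) x)) :=
      ((continuous_const.mul hΦcont).integrableOn_Icc).mono_set Set.Ioo_subset_Icc_self
    have hint1 : Integrable (fun τ => B * Φ τ + B * R) (volume.restrict (Set.Ioo (0:ℝ) x)) :=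
      hΦIox.add (integrable_const _)
    have hRHSint : Integrable (fun τ => B * Φ τ + B * R + F τ)
        (volume.restrict (Set.Ioo (0:ℝ) x)) := hint1.add (hFint' x)
    have h1 : Φ x ≤ ∫ τ in Set.Ioo (0:ℝ) x, (B * Φ τ + B * R + F τ) := by
      rw [hΦIoo x hx.1]
      exact integral_mono_ae (hφint' x) hRHSint hkx
    have h2 : (∫ τ in Set.Ioo (0:ℝ) x, (B * Φ τ + B * R + F τ))
        = B * (∫ τ in Set.Ioo (0:ℝ) x, Φ τ) + B * R * x + ∫ τ in Set.Ioo (0:ℝ) x, F τ := by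
      rw [integral_add hint1 (hFint' x),
        integral_add hΦIox (integrable_const _), integral_const_mul, setIntegral_const,
        measureReal_def, Real.volume_Ioo, sub_zero, ENNReal.toReal_ofReal hx.1, smul_eq_mul]
      ring
    have h3 : (∫ τ in Set.Ioo (0:ℝ) x, Φ τ) = G x := by
      simp only [hGdef]
      rw [intervalIntegral.integral_of_le hx.1, integral_Ioc_eq_integral_Ioo]
    have h4 : (∫ τ in Set.Ioo (0:ℝ) x, F τ) = ∫ u in (0:ℝ)..x, F u := by
      rw [intervalIntegral.integral_of_le hx.1, integral_Ioc_eq_integral_Ioo]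
    rw [h2, h3, h4] at h1
    simp only [hAdef]
    linarith
  -- Gronwall comparison
  have hexp' : ∀ x : ℝ, HasDerivAt (fun v => Real.exp (-(B*v))) (-B * Real.exp (-(B*x))) x := by
    intro x
    have h1 : HasDerivAt (fun v : ℝ => -(B*v)) (-B) x := by
      simpa using (((hasDerivAt_id x).const_mul B).fun_neg)
    simpa [mul_comm] using h1.exp
  have hcomp : ∀ t ∈ Set.Icc (0:ℝ) T,
      Real.exp (-(B * t)) * G t ≤ ∫ v in (0:ℝ)..t, Real.exp (-(B * v)) * A v := by
    intro t ht
    set w : ℝ → ℝ := fun x =>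
      (∫ v in (0:ℝ)..x, Real.exp (-(B * v)) * A v) - Real.exp (-(B * x)) * G x with hwdef
    have hcont : Continuous fun v => Real.exp (-(B * v)) * A v :=
      (Real.continuous_exp.comp (continuous_const.mul continuous_id).neg).mul hAcont
    have hw' : ∀ x : ℝ, HasDerivAt w
        (Real.exp (-(B * x)) * A x
          - (-B * Real.exp (-(B * x)) * G x + Real.exp (-(B * x)) * Φ x)) x := by
      intro x
      have hprim : HasDerivAt (fun x => ∫ v in (0:ℝ)..x, Real.exp (-(B * v)) * A v)
          (Real.exp (-(B * x)) * A x) x :=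
        intervalIntegral.integral_hasDerivAt_right (hcont.intervalIntegrable _ _)
          (hcont.stronglyMeasurableAtFilter _ _) hcont.continuousAt
      exact hprim.sub ((hexp' x).mul (hG' x))
    have hmono : MonotoneOn w (Set.Icc (0:ℝ) T) := by
      refine monotoneOn_of_deriv_nonneg (convex_Icc 0 T)
        (Differentiable.continuous fun x => (hw' x).differentiableAt).continuousOn
        (fun x _ => (hw' x).differentiableAt.differentiableWithinAt) (fun x hx => ?_)
      rw [interior_Icc] at hx
      rw [(hw' x).deriv]
      have h5 := hB1 x (Set.mem_Icc_of_Ioo hx)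
      have h6 : (0:ℝ) < Real.exp (-(B * x)) := Real.exp_pos _
      nlinarith
    have hw0 : w 0 = 0 := by
      simp only [hwdef, hGdef, intervalIntegral.integral_same, mul_zero, sub_zero, sub_self]
    have := hmono (Set.left_mem_Icc.mpr (le_trans ht.1 ht.2)) ht ht.1
    rw [hw0] at this
    simp only [hwdef] at this
    linarith
  -- final computation
  intro t ht
  have hΦt : Φ t ≤ A t + B * Real.exp (B * t) * ∫ v in (0:ℝ)..t, Real.exp (-(B * v)) * A v := by
    have h1 := hB1 t ht
    have h2 := hcomp t ht
    have h3 : G t ≤ Real.exp (B * t) * ∫ v in (0:ℝ)..t, Real.exp (-(B * v)) * A v := by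
      have := mul_le_mul_of_nonneg_left h2 (le_of_lt (Real.exp_pos (B * t)))
      calc G t = Real.exp (B * t) * (Real.exp (-(B * t)) * G t) := by
            rw [← mul_assoc, ← Real.exp_add]; ring_nf; rw [Real.exp_zero]; ring
        _ ≤ _ := this
    nlinarith [le_of_lt hB]
  have ht0 : (0:ℝ) ≤ t := ht.1
  have hexpint : ∀ a c : ℝ, a ≤ c →
      (∫ v in Set.Ioo a c, Real.exp (-(B * v)))
        = (Real.exp (-(B * a)) - Real.exp (-(B * c))) / B := by
    intro a c hac
    rw [← integral_Ioc_eq_integral_Ioo, ← intervalIntegral.integral_of_le hac]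
    have hD : ∀ x ∈ Set.uIcc a c,
        HasDerivAt (fun v => -(Real.exp (-(B * v)) / B)) (Real.exp (-(B * x))) x := by
      intro x _
      have h := ((hexp' x).div_const B).fun_neg
      refine h.congr_deriv ?_
      field_simp
    rw [intervalIntegral.integral_eq_sub_of_hasDerivAt hD
      ((Real.continuous_exp.comp (continuous_const.mul continuous_id).neg).intervalIntegrable _ _)]
    ring
  set S := Set.Ioo (0:ℝ) t with hS
  have hSmeas : MeasurableSet S := measurableSet_Ioo
  set k : ℝ → ℝ → ℝ := fun v u => if u < v then Real.exp (-(B * v)) * F u else 0 with hk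
  have hm2 : Measurable (Function.uncurry k) := by
    simp only [hk, Function.uncurry]
    exact Measurable.ite (measurableSet_lt measurable_snd measurable_fst)
      ((Real.measurable_exp.comp ((measurable_const.mul measurable_fst).neg)).mul
        (hFm.comp measurable_snd)) measurable_const
  have hint2 : Integrable (Function.uncurry k) ((volume.restrict S).prod (volume.restrict S)) := by
    rw [Measure.prod_restrict]
    refine integrable_bdd_set (C := Cf) ?_ hm2.aestronglyMeasurable ?_
    · rw [Measure.prod_prod]
      exact ENNReal.mul_lt_top (hvolIoo t) (hvolIoo t)
    · filter_upwards [ae_restrict_mem (hSmeas.prod hSmeas)] with p hp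
      obtain ⟨hp1, hp2⟩ := hp
      simp only [Function.uncurry, hk]
      split_ifs with hcase
      · rw [abs_mul, abs_of_nonneg (le_of_lt (Real.exp_pos _)), abs_of_nonneg (hF_nonneg _)]
        calc Real.exp (-(B * p.1)) * F p.2 ≤ 1 * Cf := by
              refine mul_le_mul ?_ (hF_bd _) (hF_nonneg _) zero_le_one
              exact Real.exp_le_one_iff.mpr (by nlinarith [hp1.1])
          _ = Cf := one_mul Cf
      · simpa using hCf0
  have claim1 : Set.EqOn (fun v => Real.exp (-(B * v)) * ∫ u in (0:ℝ)..v, F u)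
      (fun v => ∫ u in S, k v u) S := by
    intro v hv
    have hrw : (fun u => k v u) = Set.indicator (Set.Iio v)
        (fun u => Real.exp (-(B * v)) * F u) := by
      funext u
      simp [hk, Set.indicator_apply, Set.mem_Iio]
    dsimp only
    rw [hrw, setIntegral_indicator measurableSet_Iio, hS, Set.Ioo_inter_Iio,
      min_eq_right (le_of_lt hv.2), integral_const_mul,
      intervalIntegral.integral_of_le (le_of_lt hv.1), integral_Ioc_eq_integral_Ioo]
  have claim2 : Set.EqOn (fun u => ∫ v in S, k v u)
      (fun u => F u * ((Real.exp (-(B * u)) - Real.exp (-(B * t))) / B)) S := by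
    intro u hu
    have hrw : (fun v => k v u) = Set.indicator (Set.Ioi u)
        (fun v => Real.exp (-(B * v)) * F u) := by
      funext v
      simp [hk, Set.indicator_apply, Set.mem_Ioi]
    dsimp only
    rw [hrw, setIntegral_indicator measurableSet_Ioi, hS, Set.Ioo_inter_Ioi,
      max_eq_right (le_of_lt hu.1), integral_mul_const, hexpint u t (le_of_lt hu.2)]
    ring
  have hIv : (∫ v in (0:ℝ)..t, Real.exp (-(B * v)) * A v)
      = B * R * ((1 - Real.exp (-(B * t)) * (B * t + 1)) / B ^ 2)
        + ∫ u in S, F u * ((Real.exp (-(B * u)) - Real.exp (-(B * t))) / B) := by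
    have hFprim : Continuous fun v => ∫ u in (0:ℝ)..v, F u :=
      intervalIntegral.continuous_primitive hFii 0
    have hcont1 : Continuous fun v => B * R * (Real.exp (-(B * v)) * v) :=
      continuous_const.mul ((Real.continuous_exp.comp
        (continuous_const.mul continuous_id).neg).mul continuous_id)
    have hcont2 : Continuous fun v => Real.exp (-(B * v)) * ∫ u in (0:ℝ)..v, F u :=
      (Real.continuous_exp.comp (continuous_const.mul continuous_id).neg).mul hFprim
    have hsplit : (∫ v in (0:ℝ)..t, Real.exp (-(B * v)) * A v)
        = B * R * (∫ v in (0:ℝ)..t, Real.exp (-(B * v)) * v)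
          + ∫ v in (0:ℝ)..t, Real.exp (-(B * v)) * ∫ u in (0:ℝ)..v, F u := by
      rw [← intervalIntegral.integral_const_mul,
        ← intervalIntegral.integral_add (hcont1.intervalIntegrable _ _)
          (hcont2.intervalIntegrable _ _)]
      refine intervalIntegral.integral_congr fun v _ => ?_
      simp only [hAdef]
      ring
    have hD1 : (∫ v in (0:ℝ)..t, Real.exp (-(B * v)) * v)
        = (1 - Real.exp (-(B * t)) * (B * t + 1)) / B ^ 2 := by
      have hder : ∀ x ∈ Set.uIcc (0:ℝ) t, HasDerivAt
          (fun v => -((v / B + 1 / B ^ 2) * Real.exp (-(B * v))))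
          (Real.exp (-(B * x)) * x) x := by
        intro x _
        have h1 : HasDerivAt (fun v : ℝ => v / B + 1 / B ^ 2) (1 / B) x :=
          HasDerivAt.add_const _ ((hasDerivAt_id x).div_const B)
        have h := (h1.fun_mul (hexp' x)).fun_neg
        refine h.congr_deriv ?_
        have hBne : B ≠ 0 := ne_of_gt hB
        field_simp
        ring
      rw [intervalIntegral.integral_eq_sub_of_hasDerivAt hder
        (((Real.continuous_exp.comp (continuous_const.mul continuous_id).neg).mul
          continuous_id).intervalIntegrable _ _)]
      have hBne : B ≠ 0 := ne_of_gt hB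
      simp only [mul_zero, neg_zero, Real.exp_zero]
      field_simp
      ring
    have hswap : (∫ v in (0:ℝ)..t, Real.exp (-(B * v)) * ∫ u in (0:ℝ)..v, F u)
        = ∫ u in S, F u * ((Real.exp (-(B * u)) - Real.exp (-(B * t))) / B) := by
      rw [intervalIntegral.integral_of_le ht0, integral_Ioc_eq_integral_Ioo, ← hS,
        setIntegral_congr_fun hSmeas claim1, integral_integral_swap hint2,
        setIntegral_congr_fun hSmeas claim2]
    rw [hsplit, hD1, hswap]
  have hE : Real.exp (B * t) * Real.exp (-(B * t)) = 1 := by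
    rw [← Real.exp_add]
    simp
  have hFS : (∫ u in (0:ℝ)..t, F u) = ∫ u in S, F u := by
    rw [intervalIntegral.integral_of_le ht0, integral_Ioc_eq_integral_Ioo]
  have hintF1 : Integrable F (volume.restrict S) := hFint' t
  have hintF2 : Integrable (fun u => B * Real.exp (B * t)
      * (F u * ((Real.exp (-(B * u)) - Real.exp (-(B * t))) / B))) (volume.restrict S) := by
    have hmF2 : Measurable fun u => B * Real.exp (B * t)
        * (F u * ((Real.exp (-(B * u)) - Real.exp (-(B * t))) / B)) :=
      measurable_const.mul (hFm.mul (((Real.measurable_exp.comp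
        ((measurable_id.const_mul B).neg)).sub measurable_const).div_const B))
    refine integrable_bdd_set (C := B * Real.exp (B * t) * (Cf * (2 / B))) (hvolIoo t)
      hmF2.aestronglyMeasurable ?_
    filter_upwards [ae_restrict_mem hSmeas] with u hu
    have h1 : Real.exp (-(B * u)) ≤ 1 := Real.exp_le_one_iff.mpr (by nlinarith [hu.1])
    have h2 : Real.exp (-(B * t)) ≤ 1 := Real.exp_le_one_iff.mpr (by nlinarith)
    have h3 : (0:ℝ) < Real.exp (-(B * u)) := Real.exp_pos _
    have h4 : (0:ℝ) < Real.exp (-(B * t)) := Real.exp_pos _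
    have habs : |F u * ((Real.exp (-(B * u)) - Real.exp (-(B * t))) / B)| ≤ Cf * (2 / B) := by
      rw [abs_mul, abs_of_nonneg (hF_nonneg u), abs_div, abs_of_nonneg hB.le]
      refine mul_le_mul (hF_bd u) ?_ (by positivity) hCf0
      refine (div_le_div_iff_of_pos_right hB).mpr (abs_le.mpr ⟨by nlinarith, by nlinarith⟩)
    rw [abs_mul, abs_of_nonneg (by positivity : (0:ℝ) ≤ B * Real.exp (B * t))]
    exact mul_le_mul_of_nonneg_left habs (by positivity)
  have hcombine : (∫ u in S, F u) + (∫ u in S, B * Real.exp (B * t)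
        * (F u * ((Real.exp (-(B * u)) - Real.exp (-(B * t))) / B)))
      = ∫ u in S, Real.exp (B * (t - u)) * F u := by
    rw [← integral_add hintF1 hintF2]
    refine setIntegral_congr_fun hSmeas fun u hu => ?_
    have hE2 : Real.exp (B * t) * Real.exp (-(B * u)) = Real.exp (B * (t - u)) := by
      rw [← Real.exp_add]
      congr 1
      ring
    have hBne : B ≠ 0 := ne_of_gt hB
    field_simp
    linear_combination (F u) * hE2 - (F u) * hE
  have hfinal : A t + B * Real.exp (B * t) * (∫ v in (0:ℝ)..t, Real.exp (-(B * v)) * A v)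
      = (Real.exp (B * t) - 1) * R
        + ∫ u in Set.Ioo (0:ℝ) t, Real.exp (B * (t - u)) * F u := by
    rw [hIv, mul_add]
    simp only [hAdef]
    rw [hFS]
    have hpull : B * Real.exp (B * t) * (∫ u in S, F u
          * ((Real.exp (-(B * u)) - Real.exp (-(B * t))) / B))
        = ∫ u in S, B * Real.exp (B * t)
          * (F u * ((Real.exp (-(B * u)) - Real.exp (-(B * t))) / B)) := by
      rw [integral_const_mul]
    have hRpart : B * R * t + B * Real.exp (B * t)
        * (B * R * ((1 - Real.exp (-(B * t)) * (B * t + 1)) / B ^ 2))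
        = (Real.exp (B * t) - 1) * R := by
      have hBne : B ≠ 0 := ne_of_gt hB
      field_simp
      linear_combination (-R - R * B * t) * hE
    rw [← hS]
    linarith [hcombine, hRpart, hpull]
  rw [← hΦIoo t ht.1]
  have : (∫ u in Set.Ioo 0 t, Real.exp (B * (t - u)) * ∫ s in Set.Ioo (0:ℝ) 1, |f u s|)
      = ∫ u in Set.Ioo (0:ℝ) t, Real.exp (B * (t - u)) * F u := rfl
  rw [this]
  have := hΦt.trans_eq hfinal
  linarith
end
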